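/- arXiv:2208.11159 — 7 statements merged into one kernel-verified Lean document; each statement's English description precedes it below -/
import Mathlib

section
/- Extended Howard Semicircle Theorem for the two-phase interface problem: Let h₊, h₋ > 0, ρ⁺, ρ⁻ > 0, g ∈ ℝ, σ > 0 and k ∈ ℝ satisfy −g(ρ⁺ − ρ⁻) + σk² ≥ 0. Let U⁺ ∈ C²([0, h₊]; ℝ) and U⁻ ∈ C²([−h₋, 0]; ℝ), and set a := min(U⁻([−h₋, 0]) ∪ U⁺([0, h₊])), b := max(U⁻([−h₋, 0]) ∪ U⁺([0, h₊])). Suppose c = c_R + i c_I ∈ ℂ with c_I > 0, and suppose v₂⁺ : [0, h₊] → ℂ and v₂⁻ : [−h₋, 0] → ℂ are twice continuously differentiable and satisfy: (i) the Rayleigh equations −(v₂^±)''(x) + (k² + (U^±)''(x)/(U^±(x) − c)) v₂^±(x) = 0 on their respective intervals; (ii) v₂⁺(h₊) = 0 and v₂⁻(−h₋) = 0; (iii) the normalization v₂^±(0) = U^±(0) − c; (iv) the interface condition g(ρ⁺ − ρ⁻) − σk² = ρ⁻ (U⁻)'(0) v₂⁻(0) − ρ⁺ (U⁺)'(0) v₂⁺(0)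 + ρ⁺ (v₂⁺)'(0)(U⁺(0) − c) − ρ⁻ (v₂⁻)'(0)(U⁻(0) − c). Then (c_R − (a+b)/2)² + c_I² ≤ ((b−a)/2)². -/
open Set MeasureTheory intervalIntegral

lemma howard_side
    (h : ℝ) (hh : 0 < h)
    (U U' U'' : ℝ → ℝ)
    (hU : ∀ x ∈ Icc (0:ℝ) h, HasDerivAt U (U' x) x)
    (hU' : ∀ x ∈ Icc (0:ℝ) h, HasDerivAt U' (U'' x) x)
    (c : ℂ) (hcI : 0 < c.im)
    (a b : ℝ) (hab : ∀ x ∈ Icc (0:ℝ) h, a ≤ U x ∧ U x ≤ b)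
    (k : ℝ)
    (v v' v'' : ℝ → ℂ)
    (hv : ∀ x ∈ Icc (0:ℝ) h, HasDerivAt v (v' x) x)
    (hv' : ∀ x ∈ Icc (0:ℝ) h, HasDerivAt v' (v'' x) x)
    (hR : ∀ x ∈ Icc (0:ℝ) h, -v'' x + ((k:ℂ)^2 + (U'' x : ℂ)/((U x :ℂ) - c)) * v x = 0)
    (hb0 : v h = 0) (hn : v 0 = (U 0 : ℂ) - c) :
    ∃ J0 J1 J2 : ℝ, 0 < J0 ∧ J2 - (a+b)*J1 + a*b*J0 ≤ 0 ∧
      v' 0 * ((U 0 :ℂ) - c) - (U' 0 : ℂ) * v 0 = -((J2:ℂ) - 2*c*(J1:ℂ) + c^2*(J0:ℂ)) := by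
  -- the denominator
  set d : ℝ → ℂ := fun x => (U x : ℂ) - c with hd_def
  have hd : ∀ x, d x ≠ 0 := by
    intro x hx0
    have : (d x).im = 0 := by rw [hx0]; simp
    simp [hd_def, Complex.sub_im] at this
    exact absurd this (by linarith)
  have hdD : ∀ x ∈ Icc (0:ℝ) h, HasDerivAt d ((U' x : ℂ)) x := by
    intro x hx
    exact ((hU x hx).ofReal_comp).sub_const c
  -- w = v / d
  set w : ℝ → ℂ := fun x => v x / d x with hw_def
  set w' : ℝ → ℂ := fun x => (v' x * d x - v x * (U' x : ℂ)) / (d x)^2 with hw'_def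
  have hwD : ∀ x ∈ Icc (0:ℝ) h, HasDerivAt w (w' x) x := by
    intro x hx
    exact (hv x hx).div (hdD x hx) (hd x)
  have hw0 : w 0 = 1 := by
    simp only [hw_def, hn]
    exact div_self (hd 0)
  have hwh : w h = 0 := by simp [hw_def, hb0]
  -- F = d * v' - U' * v  (equals d^2 * w')
  set F : ℝ → ℂ := fun x => d x * v' x - (U' x : ℂ) * v x with hF_def
  have hF2 : ∀ x, F x = (d x)^2 * w' x := by
    intro x
    have : (d x)^2 * w' x = v' x * d x - v x * (U' x : ℂ) := by
      simp only [hw'_def]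
      rw [mul_comm, div_mul_cancel₀ _ (pow_ne_zero 2 (hd x))]
    rw [this]; simp only [hF_def]; ring
  -- G = F * conj w
  set G : ℝ → ℂ := fun x => F x * (starRingEnd ℂ) (w x) with hG_def
  set Q : ℝ → ℝ := fun x => ‖w' x‖^2 + k^2 * ‖w x‖^2 with hQ_def
  have hQnn : ∀ x, 0 ≤ Q x := by
    intro x; positivity
  have hGD : ∀ x ∈ Icc (0:ℝ) h, HasDerivAt G ((d x)^2 * ((Q x : ℝ) : ℂ)) x := by
    intro x hx
    have hFD : HasDerivAt F ((U' x : ℂ) * v' x + d x * v'' x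
        - ((U'' x : ℂ) * v x + (U' x : ℂ) * v' x)) x := by
      exact ((hdD x hx).mul (hv' x hx)).sub (((hU' x hx).ofReal_comp).mul (hv x hx))
    have hcw : HasDerivAt (fun y => (starRingEnd ℂ) (w y)) ((starRingEnd ℂ) (w' x)) x := by
      exact Complex.conjCLE.hasFDerivAt.comp_hasDerivAt x (hwD x hx)
    have hGD' := hFD.mul hcw
    refine HasDerivAt.congr_deriv hGD' ?_
    symm
    -- derivative value identity
    have hray : v'' x = ((k:ℂ)^2 + (U'' x : ℂ)/(d x)) * v x := by
      have := hR x hx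
      linear_combination -this
    have hvdw : v x = d x * w x := by
      simp only [hw_def]
      rw [mul_div_cancel₀ _ (hd x)]
    have hdd : d x * ((U'' x : ℂ)/(d x)) = (U'' x : ℂ) := mul_div_cancel₀ _ (hd x)
    have hF' : (U' x : ℂ) * v' x + d x * v'' x
        - ((U'' x : ℂ) * v x + (U' x : ℂ) * v' x) = (k:ℂ)^2 * (d x)^2 * w x := by
      rw [hray]
      linear_combination v x * hdd + (k:ℂ)^2 * d x * hvdw
    rw [hF', hF2 x]
    have hmc1 : w x * (starRingEnd ℂ) (w x) = ((‖w x‖^2 : ℝ) : ℂ) := by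
      rw [Complex.mul_conj']
      push_cast
      ring
    have hmc2 : w' x * (starRingEnd ℂ) (w' x) = ((‖w' x‖^2 : ℝ) : ℂ) := by
      rw [Complex.mul_conj']
      push_cast
      ring
    calc (d x)^2 * ((Q x : ℝ) : ℂ)
        = (d x)^2 * (w' x * (starRingEnd ℂ) (w' x))
          + (k:ℂ)^2 * (d x)^2 * (w x * (starRingEnd ℂ) (w x)) := by
          rw [hmc1, hmc2]; simp only [hQ_def]; push_cast; ring
      _ = (k:ℂ)^2 * (d x)^2 * w x * (starRingEnd ℂ) (w x)
          + (d x)^2 * w' x * (starRingEnd ℂ) (w' x) := by ring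
  -- continuity facts
  have hIcc : uIcc (0:ℝ) h = Icc 0 h := uIcc_of_le hh.le
  have hUc : ContinuousOn U (Icc (0:ℝ) h) := fun x hx => (hU x hx).continuousAt.continuousWithinAt
  have hU'c : ContinuousOn U' (Icc (0:ℝ) h) := fun x hx => (hU' x hx).continuousAt.continuousWithinAt
  have hvc : ContinuousOn v (Icc (0:ℝ) h) := fun x hx => (hv x hx).continuousAt.continuousWithinAt
  have hv'c : ContinuousOn v' (Icc (0:ℝ) h) := fun x hx => (hv' x hx).continuousAt.continuousWithinAt
  have hdc : ContinuousOn d (Icc (0:ℝ) h) := (Complex.continuous_ofReal.comp_continuousOn hUc).sub continuousOn_const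
  have hwc : ContinuousOn w (Icc (0:ℝ) h) := hvc.div hdc (fun x _ => hd x)
  have hw'c : ContinuousOn w' (Icc (0:ℝ) h) := by
    apply ContinuousOn.div
    · exact (hv'c.mul hdc).sub (hvc.mul (Complex.continuous_ofReal.comp_continuousOn hU'c))
    · exact hdc.pow 2
    · intro x _; exact pow_ne_zero 2 (hd x)
  have hQc : ContinuousOn Q (Icc (0:ℝ) h) := by
    apply ContinuousOn.add
    · exact (hw'c.norm.pow 2)
    · exact continuousOn_const.mul (hwc.norm.pow 2)
  have hQi : IntervalIntegrable Q volume 0 h :=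
    (hQc.mono (by rw [hIcc])).intervalIntegrable
  have hUQi : IntervalIntegrable (fun x => U x * Q x) volume 0 h :=
    ((hUc.mul hQc).mono (by rw [hIcc])).intervalIntegrable
  have hU2Qi : IntervalIntegrable (fun x => (U x)^2 * Q x) volume 0 h :=
    (((hUc.pow 2).mul hQc).mono (by rw [hIcc])).intervalIntegrable
  -- the three real integrals
  refine ⟨∫ x in (0:ℝ)..h, Q x, ∫ x in (0:ℝ)..h, U x * Q x, ∫ x in (0:ℝ)..h, (U x)^2 * Q x,
    ?_, ?_, ?_⟩
  · -- positivity of J0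
    have hw'i : IntervalIntegrable w' volume 0 h := (hw'c.mono (by rw [hIcc])).intervalIntegrable
    have hftc : ∫ x in (0:ℝ)..h, w' x = w h - w 0 := by
      apply integral_eq_sub_of_hasDerivAt
      · intro x hx; exact hwD x (by rwa [hIcc] at hx)
      · exact hw'i
    have h1 : (1:ℝ) ≤ ∫ x in (0:ℝ)..h, ‖w' x‖ := by
      have := intervalIntegral.norm_integral_le_integral_norm (f := w') (a := 0) (b := h) (μ := volume) hh.le
      rw [hftc, hwh, hw0] at this
      simpa using this
    have hptw : ∀ x ∈ Icc (0:ℝ) h, ‖w' x‖ ≤ 1/(2*h) + (h/2) * ‖w' x‖^2 := by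
      intro x _
      have h6 : 2*h*‖w' x‖ ≤ 1 + h^2 * ‖w' x‖^2 := by
        nlinarith [sq_nonneg (h * ‖w' x‖ - 1)]
      calc ‖w' x‖ = (2*h*‖w' x‖)/(2*h) := by field_simp
        _ ≤ (1 + h^2 * ‖w' x‖^2)/(2*h) := by
            apply div_le_div_of_nonneg_right h6 (by positivity) |>.trans_eq rfl
        _ = 1/(2*h) + (h/2) * ‖w' x‖^2 := by field_simp
    have hni : IntervalIntegrable (fun x => ‖w' x‖) volume 0 h := hw'i.norm
    have hbi : IntervalIntegrable (fun x => 1/(2*h) + (h/2) * ‖w' x‖^2) volume 0 h := by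
      apply IntervalIntegrable.add intervalIntegrable_const
      exact (((hw'c.norm.pow 2).mono (by rw [hIcc])).intervalIntegrable).const_mul _
    have h2 : (∫ x in (0:ℝ)..h, ‖w' x‖) ≤ ∫ x in (0:ℝ)..h, (1/(2*h) + (h/2) * ‖w' x‖^2) := by
      exact intervalIntegral.integral_mono_on hh.le hni hbi hptw
    have h3 : (∫ x in (0:ℝ)..h, (1/(2*h) + (h/2) * ‖w' x‖^2))
        = 1/2 + (h/2) * ∫ x in (0:ℝ)..h, ‖w' x‖^2 := by
      rw [intervalIntegral.integral_add (f := fun _ => 1/(2*h)) (g := fun x => (h/2) * ‖w' x‖^2) intervalIntegrable_const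
        ((((hw'c.norm.pow 2).mono (by rw [hIcc])).intervalIntegrable).const_mul _),
        intervalIntegral.integral_const, intervalIntegral.integral_const_mul]
      simp only [smul_eq_mul, sub_zero]
      field_simp
    have h4 : (0:ℝ) < ∫ x in (0:ℝ)..h, ‖w' x‖^2 := by
      rw [h3] at h2
      nlinarith
    have h5 : (∫ x in (0:ℝ)..h, ‖w' x‖^2) ≤ ∫ x in (0:ℝ)..h, Q x := by
      apply intervalIntegral.integral_mono_on hh.le
        (((hw'c.norm.pow 2).mono (by rw [hIcc])).intervalIntegrable) hQi
      intro x _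
      simp only [hQ_def, Pi.pow_apply]
      nlinarith [norm_nonneg (w x), sq_nonneg (k * ‖w x‖)]
    linarith
  · -- Howard inequality
    have key : (∫ x in (0:ℝ)..h, (U x)^2 * Q x) - (a+b) * (∫ x in (0:ℝ)..h, U x * Q x)
        + a*b*(∫ x in (0:ℝ)..h, Q x) = ∫ x in (0:ℝ)..h, (U x - a)*(U x - b)*Q x := by
      rw [← intervalIntegral.integral_const_mul (a+b), ← intervalIntegral.integral_const_mul (a*b),
        ← intervalIntegral.integral_sub hU2Qi (hUQi.const_mul _),
        ← intervalIntegral.integral_add (hU2Qi.sub (hUQi.const_mul _)) (hQi.const_mul _)]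
      apply intervalIntegral.integral_congr
      intro x _
      ring
    rw [key]
    have : (0:ℝ) ≤ ∫ x in (0:ℝ)..h, -((U x - a)*(U x - b)*Q x) := by
      apply intervalIntegral.integral_nonneg hh.le
      intro x hx
      have h7 := hab x hx
      nlinarith [mul_nonneg (mul_nonneg (sub_nonneg.mpr h7.1) (sub_nonneg.mpr h7.2)) (hQnn x)]
    rw [intervalIntegral.integral_neg] at this
    linarith
  · -- main identity
    have hGi : IntervalIntegrable (fun x => (d x)^2 * ((Q x : ℝ):ℂ)) volume 0 h := by
      apply ContinuousOn.intervalIntegrable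
      rw [hIcc]
      exact (hdc.pow 2).mul (Complex.continuous_ofReal.comp_continuousOn hQc)
    have hftc : ∫ x in (0:ℝ)..h, (d x)^2 * ((Q x : ℝ):ℂ) = G h - G 0 := by
      apply integral_eq_sub_of_hasDerivAt
      · intro x hx; exact hGD x (by rwa [hIcc] at hx)
      · exact hGi
    have hGh : G h = 0 := by simp [hG_def, hwh]
    have hG0 : G 0 = F 0 := by simp [hG_def, hw0]
    have hsplit : ∫ x in (0:ℝ)..h, (d x)^2 * ((Q x : ℝ):ℂ)
        = ((∫ x in (0:ℝ)..h, (U x)^2 * Q x : ℝ) : ℂ)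
          - 2*c*((∫ x in (0:ℝ)..h, U x * Q x : ℝ) :ℂ)
          + c^2 * ((∫ x in (0:ℝ)..h, Q x : ℝ) : ℂ) := by
      have hi1 : IntervalIntegrable (fun x => (((U x)^2 * Q x : ℝ) : ℂ)) volume 0 h := by
        apply ContinuousOn.intervalIntegrable
        rw [hIcc]
        exact Complex.continuous_ofReal.comp_continuousOn ((hUc.pow 2).mul hQc)
      have hi2 : IntervalIntegrable (fun x => (2*c) * ((U x * Q x : ℝ) : ℂ)) volume 0 h := by
        apply ContinuousOn.intervalIntegrable
        rw [hIcc]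
        exact continuousOn_const.mul (Complex.continuous_ofReal.comp_continuousOn (hUc.mul hQc))
      have hi3 : IntervalIntegrable (fun x => c^2 * ((Q x : ℝ) : ℂ)) volume 0 h := by
        apply ContinuousOn.intervalIntegrable
        rw [hIcc]
        exact continuousOn_const.mul (Complex.continuous_ofReal.comp_continuousOn hQc)
      have heq : ∀ x, (d x)^2 * ((Q x : ℝ):ℂ)
          = (((U x)^2 * Q x : ℝ) : ℂ) - (2*c) * ((U x * Q x : ℝ) : ℂ) + c^2 * ((Q x : ℝ) : ℂ) := by
        intro x
        simp only [hd_def]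
        push_cast
        ring
      rw [intervalIntegral.integral_congr (g := fun x =>
        (((U x)^2 * Q x : ℝ) : ℂ) - (2*c) * ((U x * Q x : ℝ) : ℂ) + c^2 * ((Q x : ℝ) : ℂ))
        (fun x _ => heq x)]
      rw [intervalIntegral.integral_add (hi1.sub hi2) hi3,
        intervalIntegral.integral_sub hi1 hi2,
        intervalIntegral.integral_const_mul, intervalIntegral.integral_const_mul,
        intervalIntegral.integral_ofReal, intervalIntegral.integral_ofReal,
        intervalIntegral.integral_ofReal]
    have hF0 : F 0 = d 0 * v' 0 - (U' 0 : ℂ) * v 0 := rfl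
    have : v' 0 * ((U 0 : ℂ) - c) - (U' 0 : ℂ) * v 0 = G 0 := by
      rw [hG0, hF0]; simp only [hd_def]; ring
    rw [this]
    have hG0v : G 0 = - ∫ x in (0:ℝ)..h, (d x)^2 * ((Q x : ℝ):ℂ) := by
      rw [hftc, hGh]; ring
    rw [hG0v, hsplit]
/-- Extended Howard Semicircle Theorem for the linearized two-phase interface problem:
any unstable wave speed `c` (with `c.im > 0`) of the eigenvalue problem lies in the
upper semicircle determined by the range of the shear profiles. -/
theorem semicircle_two_phase
    (hp hm : ℝ) (hhp : 0 < hp) (hhm : 0 < hm)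
    (ρp ρm : ℝ) (hρp : 0 < ρp) (hρm : 0 < ρm)
    (g σ k : ℝ) (hσ : 0 < σ)
    (hst : 0 ≤ -g * (ρp - ρm) + σ * k ^ 2)
    (Up Up' Up'' : ℝ → ℝ)
    (hUp : ∀ x ∈ Icc (0:ℝ) hp, HasDerivAt Up (Up' x) x)
    (hUp' : ∀ x ∈ Icc (0:ℝ) hp, HasDerivAt Up' (Up'' x) x)
    (hUpc : ContinuousOn Up'' (Icc (0:ℝ) hp))
    (Um Um' Um'' : ℝ → ℝ)
    (hUm : ∀ x ∈ Icc (-hm) (0:ℝ), HasDerivAt Um (Um' x) x)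
    (hUm' : ∀ x ∈ Icc (-hm) (0:ℝ), HasDerivAt Um' (Um'' x) x)
    (hUmc : ContinuousOn Um'' (Icc (-hm) (0:ℝ)))
    (a b : ℝ)
    (ha : a = sInf (Um '' Icc (-hm) 0 ∪ Up '' Icc 0 hp))
    (hb : b = sSup (Um '' Icc (-hm) 0 ∪ Up '' Icc 0 hp))
    (c : ℂ) (hcI : 0 < c.im)
    (vp vp' vp'' : ℝ → ℂ)
    (hvp : ∀ x ∈ Icc (0:ℝ) hp, HasDerivAt vp (vp' x) x)
    (hvp' : ∀ x ∈ Icc (0:ℝ) hp, HasDerivAt vp' (vp'' x) x)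
    (hvpc : ContinuousOn vp'' (Icc (0:ℝ) hp))
    (vm vm' vm'' : ℝ → ℂ)
    (hvm : ∀ x ∈ Icc (-hm) (0:ℝ), HasDerivAt vm (vm' x) x)
    (hvm' : ∀ x ∈ Icc (-hm) (0:ℝ), HasDerivAt vm' (vm'' x) x)
    (hvmc : ContinuousOn vm'' (Icc (-hm) (0:ℝ)))
    (hRp : ∀ x ∈ Icc (0:ℝ) hp,
      -vp'' x + ((k : ℂ) ^ 2 + (Up'' x : ℂ) / ((Up x : ℂ) - c)) * vp x = 0)
    (hRm : ∀ x ∈ Icc (-hm) (0:ℝ),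
      -vm'' x + ((k : ℂ) ^ 2 + (Um'' x : ℂ) / ((Um x : ℂ) - c)) * vm x = 0)
    (hbp : vp hp = 0) (hbm : vm (-hm) = 0)
    (hnp : vp 0 = (Up 0 : ℂ) - c) (hnm : vm 0 = (Um 0 : ℂ) - c)
    (hint : ((g * (ρp - ρm) - σ * k ^ 2 : ℝ) : ℂ)
      = (ρm : ℂ) * (Um' 0 : ℂ) * vm 0 - (ρp : ℂ) * (Up' 0 : ℂ) * vp 0
        + (ρp : ℂ) * vp' 0 * ((Up 0 : ℂ) - c)
        - (ρm : ℂ) * vm' 0 * ((Um 0 : ℂ) - c)) :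
    (c.re - (a + b) / 2) ^ 2 + c.im ^ 2 ≤ ((b - a) / 2) ^ 2 := by
  -- bounds on the shear profiles
  have hUmc0 : ContinuousOn Um (Icc (-hm) 0) :=
    fun x hx => (hUm x hx).continuousAt.continuousWithinAt
  have hUpc0 : ContinuousOn Up (Icc 0 hp) :=
    fun x hx => (hUp x hx).continuousAt.continuousWithinAt
  have hcomp : IsCompact (Um '' Icc (-hm) 0 ∪ Up '' Icc 0 hp) :=
    (isCompact_Icc.image_of_continuousOn hUmc0).union
      (isCompact_Icc.image_of_continuousOn hUpc0)
  have habp : ∀ x ∈ Icc (0:ℝ) hp, a ≤ Up x ∧ Up x ≤ b := by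
    intro x hx
    have hmem : Up x ∈ Um '' Icc (-hm) 0 ∪ Up '' Icc 0 hp := Or.inr ⟨x, hx, rfl⟩
    exact ⟨ha ▸ csInf_le hcomp.bddBelow hmem, hb ▸ le_csSup hcomp.bddAbove hmem⟩
  have hmemI : ∀ x ∈ Icc (0:ℝ) hm, -x ∈ Icc (-hm) (0:ℝ) := by
    intro x hx
    exact ⟨by linarith [hx.2], by linarith [hx.1]⟩
  have habm : ∀ x ∈ Icc (0:ℝ) hm, a ≤ Um (-x) ∧ Um (-x) ≤ b := by
    intro x hx
    have hmem : Um (-x) ∈ Um '' Icc (-hm) 0 ∪ Up '' Icc 0 hp :=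
      Or.inl ⟨-x, hmemI x hx, rfl⟩
    exact ⟨ha ▸ csInf_le hcomp.bddBelow hmem, hb ▸ le_csSup hcomp.bddAbove hmem⟩
  -- plus side
  obtain ⟨Jp0, Jp1, Jp2, hJp0, hJpH, hJpE⟩ :=
    howard_side hp hhp Up Up' Up'' hUp hUp' c hcI a b habp k vp vp' vp'' hvp hvp' hRp hbp hnp
  -- minus side, reflected
  obtain ⟨Jm0, Jm1, Jm2, hJm0, hJmH, hJmE⟩ :=
    howard_side hm hhm (fun x => Um (-x)) (fun x => -Um' (-x)) (fun x => Um'' (-x))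
      (by
        intro x hx
        simpa [Function.comp_def, Pi.neg_def] using ((hUm (-x) (hmemI x hx)).comp x (hasDerivAt_neg x)))
      (by
        intro x hx
        simpa [Function.comp_def, Pi.neg_def] using ((hUm' (-x) (hmemI x hx)).comp x (hasDerivAt_neg x)).neg)
      c hcI a b habm k
      (fun x => vm (-x)) (fun x => -vm' (-x)) (fun x => vm'' (-x))
      (by
        intro x hx
        simpa [Function.comp_def, Pi.neg_def] using ((hvm (-x) (hmemI x hx)).scomp x (hasDerivAt_neg x)))
      (by
        intro x hx
        simpa [Function.comp_def, Pi.neg_def] using ((hvm' (-x) (hmemI x hx)).scomp x (hasDerivAt_neg x)).neg)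
      (by
        intro x hx
        simpa using hRm (-x) (hmemI x hx))
      (by simpa using hbm)
      (by simpa using hnm)
  simp only [neg_zero, Complex.ofReal_neg, neg_mul, neg_neg] at hJmE
  -- combine via the interface condition
  have hE : ((g * (ρp - ρm) - σ * k ^ 2 : ℝ) : ℂ)
      = -(((ρp * Jp2 + ρm * Jm2 : ℝ) : ℂ)
          - 2 * c * ((ρp * Jp1 + ρm * Jm1 : ℝ) : ℂ)
          + c ^ 2 * ((ρp * Jp0 + ρm * Jm0 : ℝ) : ℂ)) := by
    rw [hint]
    push_cast
    linear_combination (ρp : ℂ) * hJpE + (ρm : ℂ) * hJmE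
  obtain ⟨hre, him⟩ := Complex.ext_iff.mp hE
  simp only [pow_two, Complex.neg_re, Complex.neg_im, Complex.add_re, Complex.add_im,
    Complex.sub_re, Complex.sub_im, Complex.mul_re, Complex.mul_im,
    Complex.ofReal_re, Complex.ofReal_im, Complex.re_ofNat, Complex.im_ofNat] at hre him
  have hK0pos : 0 < ρp * Jp0 + ρm * Jm0 := add_pos (mul_pos hρp hJp0) (mul_pos hρm hJm0)
  have hK1eq : ρp * Jp1 + ρm * Jm1 = c.re * (ρp * Jp0 + ρm * Jm0) := by
    have h2ci : (2 * c.im) ≠ 0 := by positivity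
    apply mul_left_cancel₀ h2ci
    linear_combination -him
  have hK2eq : ρp * Jp2 + ρm * Jm2
      = (-g * (ρp - ρm) + σ * k ^ 2) + (c.re ^ 2 + c.im ^ 2) * (ρp * Jp0 + ρm * Jm0) := by
    linear_combination hre + 2 * c.re * hK1eq
  have hHow : (ρp * Jp2 + ρm * Jm2) - (a + b) * (ρp * Jp1 + ρm * Jm1)
      + a * b * (ρp * Jp0 + ρm * Jm0) ≤ 0 := by
    nlinarith [mul_le_mul_of_nonneg_left hJpH hρp.le, mul_le_mul_of_nonneg_left hJmH hρm.le]
  rw [hK2eq, hK1eq] at hHow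
  nlinarith [hHow, hst, hK0pos, mul_pos hK0pos hcI]
end

section
/- Let h > 0, U ∈ C¹([−h, 0]; ℝ), k ∈ ℝ, and c ∈ ℂ with Im c ≠ 0. Suppose ψ : [−h, 0] → ℂ is twice continuously differentiable, satisfies ((U(x) − c)² ψ'(x))' − k² (U(x) − c)² ψ(x) = 0 on [−h, 0], and ψ(−h) = 0. Then (U(0) − c)² ψ'(0) · conj(ψ(0)) = ∫_{−h}^{0} (U(x) − c)² ( k² |ψ(x)|² + |ψ'(x)|² ) dx. -/
open Set MeasureTheory intervalIntegral

/-- Basic integral identity for the self-adjoint form of the Rayleigh equation,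
used in the proof of the Semicircle Theorem. -/
theorem rayleigh_integral_identity
    (h : ℝ) (hh : 0 < h)
    (U U' : ℝ → ℝ)
    (hU : ∀ x ∈ Icc (-h) (0:ℝ), HasDerivAt U (U' x) x)
    (hU' : ContinuousOn U' (Icc (-h) (0:ℝ)))
    (k : ℝ) (c : ℂ) (hc : c.im ≠ 0)
    (ψ ψ' ψ'' : ℝ → ℂ)
    (hψ : ∀ x ∈ Icc (-h) (0:ℝ), HasDerivAt ψ (ψ' x) x)
    (hψ' : ∀ x ∈ Icc (-h) (0:ℝ), HasDerivAt ψ' (ψ'' x) x)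
    (hψ'' : ContinuousOn ψ'' (Icc (-h) (0:ℝ)))
    (hode : ∀ x ∈ Icc (-h) (0:ℝ),
      HasDerivAt (fun t => ((U t : ℂ) - c) ^ 2 * ψ' t)
        ((k : ℂ) ^ 2 * ((U x : ℂ) - c) ^ 2 * ψ x) x)
    (hbd : ψ (-h) = 0) :
    ((U 0 : ℂ) - c) ^ 2 * ψ' 0 * (starRingEnd ℂ) (ψ 0)
      = ∫ x in (-h)..0, ((U x : ℂ) - c) ^ 2
          * ((k ^ 2 * ‖ψ x‖ ^ 2 + ‖ψ' x‖ ^ 2 : ℝ) : ℂ) := by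
  have hle : (-h : ℝ) ≤ 0 := by linarith
  have huIcc : uIcc (-h) (0:ℝ) = Icc (-h) 0 := uIcc_of_le hle
  set g : ℝ → ℂ := fun x => ((U x : ℂ) - c) ^ 2
      * ((k ^ 2 * ‖ψ x‖ ^ 2 + ‖ψ' x‖ ^ 2 : ℝ) : ℂ) with hg
  set F : ℝ → ℂ := fun x => ((U x : ℂ) - c) ^ 2 * ψ' x * (starRingEnd ℂ) (ψ x) with hF
  -- continuity facts
  have hUc : ContinuousOn U (Icc (-h) 0) := fun x hx => (hU x hx).continuousAt.continuousWithinAt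
  have hψc : ContinuousOn ψ (Icc (-h) 0) := fun x hx => (hψ x hx).continuousAt.continuousWithinAt
  have hψ'c : ContinuousOn ψ' (Icc (-h) 0) :=
    fun x hx => (hψ' x hx).continuousAt.continuousWithinAt
  have hgc : ContinuousOn g (Icc (-h) 0) := by
    apply ContinuousOn.mul
    · exact ((Complex.continuous_ofReal.comp_continuousOn hUc).sub continuousOn_const).pow 2
    · exact Complex.continuous_ofReal.comp_continuousOn
        (((continuousOn_const).mul ((hψc.norm).pow 2)).add ((hψ'c.norm).pow 2))
  have hderiv : ∀ x ∈ uIcc (-h) (0:ℝ), HasDerivAt F (g x) x := by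
    intro x hx
    rw [huIcc] at hx
    have h1 := (hode x hx).mul ((hψ x hx).star)
    convert h1 using 1
    · rfl
    · rfl
    have hmc : ψ x * (starRingEnd ℂ) (ψ x) = ((‖ψ x‖ ^ 2 : ℝ) : ℂ) := by
      simp [Complex.mul_conj, Complex.normSq_eq_norm_sq]
    have hmc' : ψ' x * (starRingEnd ℂ) (ψ' x) = ((‖ψ' x‖ ^ 2 : ℝ) : ℂ) := by
      simp [Complex.mul_conj, Complex.normSq_eq_norm_sq]
    rw [starRingEnd_apply] at hmc hmc'
    simp only [hg]
    push_cast at hmc hmc' ⊢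
    linear_combination -(k : ℂ) ^ 2 * ((U x : ℂ) - c) ^ 2 * hmc
      - ((U x : ℂ) - c) ^ 2 * hmc'
  have hint : IntervalIntegrable g volume (-h) 0 := by
    apply ContinuousOn.intervalIntegrable
    rwa [huIcc]
  have key := intervalIntegral.integral_eq_sub_of_hasDerivAt hderiv hint
  rw [key, hF]
  simp [hbd]
end

section
/- Let h₊, h₋ > 0, ρ⁺, ρ⁻ > 0, g ∈ ℝ, σ > 0, k ∈ ℝ, U⁺ ∈ C¹([0, h₊]; ℝ), U⁻ ∈ C¹([−h₋, 0]; ℝ), and c = c_R + i c_I ∈ ℂ with c_I ≠ 0. Suppose ψ⁺ : [0, h₊] → ℂ and ψ⁻ : [−h₋, 0] → ℂ are twice continuously differentiable and satisfy ((U^±(x) − c)² (ψ^±)'(x))' − k² (U^±(x) − c)² ψ^±(x) = 0 on their respective intervals, ψ⁺(h₊) = 0, ψ⁻(−h₋) = 0, ψ^±(0) = −1, and the free boundary condition −g(ρ⁺ − ρ⁻) + σk² = ρ⁺ (U⁺(0) − c)² (ψ⁺)'(0) − ρ⁻ (U⁻(0) − c)² (ψ⁻)'(0). Define Q^± := k²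 |ψ^±|² + |(ψ^±)'|². Then ∫₀^{h₊} ρ⁺ U⁺ Q⁺ dx + ∫_{−h₋}^{0} ρ⁻ U⁻ Q⁻ dx = c_R ( ∫₀^{h₊} ρ⁺ Q⁺ dx + ∫_{−h₋}^{0} ρ⁻ Q⁻ dx ). -/
open Set MeasureTheory intervalIntegral ComplexConjugate

lemma im_intervalIntegral {f : ℝ → ℂ} {a b : ℝ} (hf : IntervalIntegrable f volume a b) :
    (∫ x in a..b, f x).im = ∫ x in a..b, (f x).im := by
  have h1 : ∫ x in Ioc a b, (f x).im = (∫ x in Ioc a b, f x).im := integral_im hf.1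
  have h2 : ∫ x in Ioc b a, (f x).im = (∫ x in Ioc b a, f x).im := integral_im hf.2
  rw [intervalIntegral, intervalIntegral, Complex.sub_im, ← h1, ← h2]

lemma rayleigh_identity (k a b : ℝ) (hab : a ≤ b) (c : ℂ)
    (U : ℝ → ℝ) (hU : ContinuousOn U (Icc a b))
    (ψ ψ' : ℝ → ℂ)
    (hψ : ∀ x ∈ Icc a b, HasDerivAt ψ (ψ' x) x)
    (hψc : ContinuousOn ψ' (Icc a b))
    (hode : ∀ x ∈ Icc a b, HasDerivAt (fun t => ((U t : ℂ) - c) ^ 2 * ψ' t)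
      ((k : ℂ) ^ 2 * ((U x : ℂ) - c) ^ 2 * ψ x) x) :
    ∫ x in a..b, ((U x : ℂ) - c) ^ 2 * ((k ^ 2 * ‖ψ x‖ ^ 2 + ‖ψ' x‖ ^ 2 : ℝ) : ℂ)
      = ((U b : ℂ) - c) ^ 2 * ψ' b * conj (ψ b)
        - ((U a : ℂ) - c) ^ 2 * ψ' a * conj (ψ a) := by
  have hψcont : ContinuousOn ψ (Icc a b) :=
    fun x hx => (hψ x hx).continuousAt.continuousWithinAt
  have hderiv : ∀ x ∈ Icc a b,
      HasDerivAt (fun t => ((U t : ℂ) - c) ^ 2 * ψ' t * conj (ψ t))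
        (((U x : ℂ) - c) ^ 2 * ((k ^ 2 * ‖ψ x‖ ^ 2 + ‖ψ' x‖ ^ 2 : ℝ) : ℂ)) x := by
    intro x hx
    have h := (hode x hx).mul ((hψ x hx).star)
    refine HasDerivAt.congr_deriv h ?_
    have h1 : ψ x * star (ψ x) = ((‖ψ x‖ ^ 2 : ℝ) : ℂ) := by
      rw [Complex.star_def, Complex.mul_conj, Complex.normSq_eq_norm_sq]
    have h2 : ψ' x * star (ψ' x) = ((‖ψ' x‖ ^ 2 : ℝ) : ℂ) := by
      rw [Complex.star_def, Complex.mul_conj, Complex.normSq_eq_norm_sq]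
    push_cast
    rw [show (k:ℂ) ^ 2 * ((U x : ℂ) - c) ^ 2 * ψ x * star (ψ x)
        = (k:ℂ)^2 * ((U x : ℂ) - c) ^ 2 * (ψ x * star (ψ x)) by ring,
      show ((U x : ℂ) - c) ^ 2 * ψ' x * star (ψ' x)
        = ((U x : ℂ) - c) ^ 2 * (ψ' x * star (ψ' x)) by ring, h1, h2]
    push_cast
    ring
  have hcontint : ContinuousOn
      (fun x => ((U x : ℂ) - c) ^ 2 * ((k ^ 2 * ‖ψ x‖ ^ 2 + ‖ψ' x‖ ^ 2 : ℝ) : ℂ))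
      (Icc a b) := by
    apply ContinuousOn.mul
    · exact ((Complex.continuous_ofReal.comp_continuousOn hU).sub continuousOn_const).pow 2
    · exact Complex.continuous_ofReal.comp_continuousOn
        ((continuousOn_const.mul ((hψcont.norm).pow 2)).add ((hψc.norm).pow 2))
  exact intervalIntegral.integral_eq_sub_of_hasDerivAt
    (f := fun t => ((U t : ℂ) - c) ^ 2 * ψ' t * conj (ψ t))
    (fun x hx => hderiv x (by rwa [uIcc_of_le hab] at hx))
    ((hcontint.mono (by rw [uIcc_of_le hab])).intervalIntegrable)

lemma rayleigh_im (k a b : ℝ) (hab : a ≤ b) (c : ℂ)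
    (U : ℝ → ℝ) (hU : ContinuousOn U (Icc a b))
    (ψ ψ' : ℝ → ℂ)
    (hψ : ∀ x ∈ Icc a b, HasDerivAt ψ (ψ' x) x)
    (hψc : ContinuousOn ψ' (Icc a b))
    (hode : ∀ x ∈ Icc a b, HasDerivAt (fun t => ((U t : ℂ) - c) ^ 2 * ψ' t)
      ((k : ℂ) ^ 2 * ((U x : ℂ) - c) ^ 2 * ψ x) x) :
    (-(2 * c.im)) * ∫ x in a..b, (U x - c.re) * (k ^ 2 * ‖ψ x‖ ^ 2 + ‖ψ' x‖ ^ 2)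
      = (((U b : ℂ) - c) ^ 2 * ψ' b * conj (ψ b)
        - ((U a : ℂ) - c) ^ 2 * ψ' a * conj (ψ a)).im := by
  have hψcont : ContinuousOn ψ (Icc a b) :=
    fun x hx => (hψ x hx).continuousAt.continuousWithinAt
  have hcontint : ContinuousOn
      (fun x => ((U x : ℂ) - c) ^ 2 * ((k ^ 2 * ‖ψ x‖ ^ 2 + ‖ψ' x‖ ^ 2 : ℝ) : ℂ))
      (Icc a b) := by
    apply ContinuousOn.mul
    · exact ((Complex.continuous_ofReal.comp_continuousOn hU).sub continuousOn_const).pow 2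
    · exact Complex.continuous_ofReal.comp_continuousOn
        ((continuousOn_const.mul ((hψcont.norm).pow 2)).add ((hψc.norm).pow 2))
  have hint : IntervalIntegrable
      (fun x => ((U x : ℂ) - c) ^ 2 * ((k ^ 2 * ‖ψ x‖ ^ 2 + ‖ψ' x‖ ^ 2 : ℝ) : ℂ))
      volume a b := (hcontint.mono (by rw [uIcc_of_le hab])).intervalIntegrable
  rw [← rayleigh_identity k a b hab c U hU ψ ψ' hψ hψc hode,
    im_intervalIntegral hint, ← intervalIntegral.integral_const_mul]
  congr 1
  ext x
  simp only [Complex.mul_im, Complex.ofReal_im, Complex.ofReal_re, pow_two,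
    Complex.mul_re, Complex.sub_re, Complex.sub_im, Complex.ofReal_re, Complex.ofReal_im]
  ring
/-- First-moment identity from the imaginary parts of the integrated Rayleigh identities
combined with the free boundary condition. -/
theorem first_moment_identity
    (hp hm : ℝ) (hhp : 0 < hp) (hhm : 0 < hm)
    (ρp ρm : ℝ) (hρp : 0 < ρp) (hρm : 0 < ρm)
    (g σ k : ℝ) (hσ : 0 < σ)
    (Up Up' : ℝ → ℝ)
    (hUp : ∀ x ∈ Icc (0:ℝ) hp, HasDerivAt Up (Up' x) x)
    (hUpc : ContinuousOn Up' (Icc (0:ℝ) hp))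
    (Um Um' : ℝ → ℝ)
    (hUm : ∀ x ∈ Icc (-hm) (0:ℝ), HasDerivAt Um (Um' x) x)
    (hUmc : ContinuousOn Um' (Icc (-hm) (0:ℝ)))
    (c : ℂ) (hcI : c.im ≠ 0)
    (ψp ψp' ψp'' ψm ψm' ψm'' : ℝ → ℂ)
    (hψp : ∀ x ∈ Icc (0:ℝ) hp, HasDerivAt ψp (ψp' x) x)
    (hψp' : ∀ x ∈ Icc (0:ℝ) hp, HasDerivAt ψp' (ψp'' x) x)
    (hψpc : ContinuousOn ψp'' (Icc (0:ℝ) hp))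
    (hψm : ∀ x ∈ Icc (-hm) (0:ℝ), HasDerivAt ψm (ψm' x) x)
    (hψm' : ∀ x ∈ Icc (-hm) (0:ℝ), HasDerivAt ψm' (ψm'' x) x)
    (hψmc : ContinuousOn ψm'' (Icc (-hm) (0:ℝ)))
    (hodep : ∀ x ∈ Icc (0:ℝ) hp,
      HasDerivAt (fun t => ((Up t : ℂ) - c) ^ 2 * ψp' t)
        ((k : ℂ) ^ 2 * ((Up x : ℂ) - c) ^ 2 * ψp x) x)
    (hodem : ∀ x ∈ Icc (-hm) (0:ℝ),
      HasDerivAt (fun t => ((Um t : ℂ) - c) ^ 2 * ψm' t)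
        ((k : ℂ) ^ 2 * ((Um x : ℂ) - c) ^ 2 * ψm x) x)
    (hbp : ψp hp = 0) (hbm : ψm (-hm) = 0)
    (hnp : ψp 0 = -1) (hnm : ψm 0 = -1)
    (hfb : ((-g * (ρp - ρm) + σ * k ^ 2 : ℝ) : ℂ)
      = (ρp : ℂ) * ((Up 0 : ℂ) - c) ^ 2 * ψp' 0
        - (ρm : ℂ) * ((Um 0 : ℂ) - c) ^ 2 * ψm' 0) :
    (∫ x in (0:ℝ)..hp, ρp * Up x * (k ^ 2 * ‖ψp x‖ ^ 2 + ‖ψp' x‖ ^ 2))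
      + ∫ x in (-hm)..0, ρm * Um x * (k ^ 2 * ‖ψm x‖ ^ 2 + ‖ψm' x‖ ^ 2)
    = c.re * ((∫ x in (0:ℝ)..hp, ρp * (k ^ 2 * ‖ψp x‖ ^ 2 + ‖ψp' x‖ ^ 2))
        + ∫ x in (-hm)..0, ρm * (k ^ 2 * ‖ψm x‖ ^ 2 + ‖ψm' x‖ ^ 2)) := by
  have hmle : (-hm : ℝ) ≤ 0 := by linarith
  -- continuity data
  have hUpcont : ContinuousOn Up (Icc (0:ℝ) hp) :=
    fun x hx => (hUp x hx).continuousAt.continuousWithinAt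
  have hUmcont : ContinuousOn Um (Icc (-hm) (0:ℝ)) :=
    fun x hx => (hUm x hx).continuousAt.continuousWithinAt
  have hψpcont : ContinuousOn ψp (Icc (0:ℝ) hp) :=
    fun x hx => (hψp x hx).continuousAt.continuousWithinAt
  have hψp'cont : ContinuousOn ψp' (Icc (0:ℝ) hp) :=
    fun x hx => (hψp' x hx).continuousAt.continuousWithinAt
  have hψmcont : ContinuousOn ψm (Icc (-hm) (0:ℝ)) :=
    fun x hx => (hψm x hx).continuousAt.continuousWithinAt
  have hψm'cont : ContinuousOn ψm' (Icc (-hm) (0:ℝ)) :=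
    fun x hx => (hψm' x hx).continuousAt.continuousWithinAt
  set Qp : ℝ → ℝ := fun x => k ^ 2 * ‖ψp x‖ ^ 2 + ‖ψp' x‖ ^ 2 with hQpdef
  set Qm : ℝ → ℝ := fun x => k ^ 2 * ‖ψm x‖ ^ 2 + ‖ψm' x‖ ^ 2 with hQmdef
  have hQpcont : ContinuousOn Qp (Icc (0:ℝ) hp) :=
    (continuousOn_const.mul ((hψpcont.norm).pow 2)).add ((hψp'cont.norm).pow 2)
  have hQmcont : ContinuousOn Qm (Icc (-hm) (0:ℝ)) :=
    (continuousOn_const.mul ((hψmcont.norm).pow 2)).add ((hψm'cont.norm).pow 2)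
  -- imaginary part of the integrated Rayleigh identities
  have hRp := rayleigh_im k 0 hp hhp.le c Up hUpcont ψp ψp' hψp hψp'cont hodep
  have hRm := rayleigh_im k (-hm) 0 hmle c Um hUmcont ψm ψm' hψm hψm'cont hodem
  rw [hbp, hnp] at hRp
  rw [hbm, hnm] at hRm
  simp only [map_zero, mul_zero, zero_sub, map_neg, map_one, mul_neg, mul_one,
    neg_neg, sub_zero] at hRp hRm
  -- hRp : -(2*c.im) * ∫ ... = (((Up 0:ℂ)-c)^2 * ψp' 0).im
  -- hRm : -(2*c.im) * ∫ ... = (-(((Um 0:ℂ)-c)^2 * ψm' 0)).im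
  -- imaginary part of the free boundary condition
  have hfbim : ρp * (((Up 0 : ℂ) - c) ^ 2 * ψp' 0).im
      - ρm * (((Um 0 : ℂ) - c) ^ 2 * ψm' 0).im = 0 := by
    have h0 : ((-g * (ρp - ρm) + σ * k ^ 2 : ℝ) : ℂ).im = 0 := Complex.ofReal_im _
    rw [hfb] at h0
    simpa [Complex.sub_im, mul_assoc, Complex.mul_im, Complex.ofReal_im, Complex.ofReal_re] using h0
  -- sum of weighted first moments of (U - c.re) vanishes
  have hsum : ρp * (∫ x in (0:ℝ)..hp, (Up x - c.re) * Qp x)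
      + ρm * (∫ x in (-hm)..0, (Um x - c.re) * Qm x) = 0 := by
    have h2 : c.im ≠ 0 := hcI
    have hA : (-(2*c.im)) * (ρp * (∫ x in (0:ℝ)..hp, (Up x - c.re) * Qp x)
        + ρm * (∫ x in (-hm)..0, (Um x - c.re) * Qm x)) = 0 := by
      have e1 : (-(2*c.im)) * (ρp * (∫ x in (0:ℝ)..hp, (Up x - c.re) * Qp x))
          = ρp * (((Up 0 : ℂ) - c) ^ 2 * ψp' 0).im := by
        rw [← hRp]; ring
      have e2 : (-(2*c.im)) * (ρm * (∫ x in (-hm)..0, (Um x - c.re) * Qm x))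
          = ρm * (-(((Um 0 : ℂ) - c) ^ 2 * ψm' 0)).im := by
        rw [← hRm]; ring
      rw [mul_add, e1, e2, Complex.neg_im]
      linarith [hfbim]
    rcases mul_eq_zero.mp hA with h | h
    · exfalso; apply h2; linarith [h]
    · exact h
  -- integrability
  have hip1 : IntervalIntegrable (fun x => Up x * Qp x) volume 0 hp :=
    ((hUpcont.mul hQpcont).mono (by rw [uIcc_of_le hhp.le])).intervalIntegrable
  have hip2 : IntervalIntegrable Qp volume 0 hp :=
    (hQpcont.mono (by rw [uIcc_of_le hhp.le])).intervalIntegrable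
  have him1 : IntervalIntegrable (fun x => Um x * Qm x) volume (-hm) 0 :=
    ((hUmcont.mul hQmcont).mono (by rw [uIcc_of_le hmle])).intervalIntegrable
  have him2 : IntervalIntegrable Qm volume (-hm) 0 :=
    (hQmcont.mono (by rw [uIcc_of_le hmle])).intervalIntegrable
  -- decompose the integrals
  have hdp : (∫ x in (0:ℝ)..hp, (Up x - c.re) * Qp x)
      = (∫ x in (0:ℝ)..hp, Up x * Qp x) - c.re * ∫ x in (0:ℝ)..hp, Qp x := by
    rw [← intervalIntegral.integral_const_mul, ← intervalIntegral.integral_sub hip1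
      (hip2.const_mul c.re)]
    congr 1; ext x; ring
  have hdm : (∫ x in (-hm)..0, (Um x - c.re) * Qm x)
      = (∫ x in (-hm)..0, Um x * Qm x) - c.re * ∫ x in (-hm)..0, Qm x := by
    rw [← intervalIntegral.integral_const_mul, ← intervalIntegral.integral_sub him1
      (him2.const_mul c.re)]
    congr 1; ext x; ring
  -- pull out the densities in the goal
  have g1 : (∫ x in (0:ℝ)..hp, ρp * Up x * Qp x) = ρp * ∫ x in (0:ℝ)..hp, Up x * Qp x := by
    rw [← intervalIntegral.integral_const_mul]; congr 1; ext x; ring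
  have g2 : (∫ x in (-hm)..0, ρm * Um x * Qm x) = ρm * ∫ x in (-hm)..0, Um x * Qm x := by
    rw [← intervalIntegral.integral_const_mul]; congr 1; ext x; ring
  have g3 : (∫ x in (0:ℝ)..hp, ρp * Qp x) = ρp * ∫ x in (0:ℝ)..hp, Qp x :=
    intervalIntegral.integral_const_mul _ _
  have g4 : (∫ x in (-hm)..0, ρm * Qm x) = ρm * ∫ x in (-hm)..0, Qm x :=
    intervalIntegral.integral_const_mul _ _
  rw [hdp, hdm] at hsum
  show (∫ x in (0:ℝ)..hp, ρp * Up x * Qp x) + (∫ x in (-hm)..0, ρm * Um x * Qm x)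
    = c.re * ((∫ x in (0:ℝ)..hp, ρp * Qp x) + ∫ x in (-hm)..0, ρm * Qm x)
  rw [g1, g2, g3, g4]
  nlinarith [hsum]
end

section
/- Let h₊, h₋ > 0, ρ⁺, ρ⁻ > 0, g ∈ ℝ, σ > 0, k ∈ ℝ, U⁺ ∈ C¹([0, h₊]; ℝ), U⁻ ∈ C¹([−h₋, 0]; ℝ), and c = c_R + i c_I ∈ ℂ with c_I ≠ 0. Suppose ψ⁺ : [0, h₊] → ℂ and ψ⁻ : [−h₋, 0] → ℂ are twice continuously differentiable and satisfy ((U^±(x) − c)² (ψ^±)'(x))' − k² (U^±(x) − c)² ψ^±(x) = 0 on their respective intervals, ψ⁺(h₊) = 0, ψ⁻(−h₋) = 0, ψ^±(0) = −1, and the free boundary condition −g(ρ⁺ − ρ⁻) + σk² = ρ⁺ (U⁺(0) − c)² (ψ⁺)'(0) − ρ⁻ (U⁻(0) − c)² (ψ⁻)'(0). Define Q^± := k² |ψ^±|² + |(ψ^±)'|². Then ∫₀^{h₊} ρ⁺ (U⁺)² Q⁺ dx + ∫_{−h₋}^{0} ρ⁻ (U⁻)² Q⁻ dx = (c_R² +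 c_I²) ( ∫₀^{h₊} ρ⁺ Q⁺ dx + ∫_{−h₋}^{0} ρ⁻ Q⁻ dx ) − g(ρ⁺ − ρ⁻) + σk². -/
open Set MeasureTheory intervalIntegral

lemma moment_identity (a b : ℝ) (hab : a ≤ b) (k : ℝ) (c : ℂ)
    (U : ℝ → ℝ) (ψ ψ' : ℝ → ℂ)
    (hU : ContinuousOn U (Icc a b))
    (hψ : ∀ x ∈ Icc a b, HasDerivAt ψ (ψ' x) x)
    (hψ'c : ContinuousOn ψ' (Icc a b))
    (hode : ∀ x ∈ Icc a b,
      HasDerivAt (fun t => ((U t : ℂ) - c) ^ 2 * ψ' t)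
        ((k : ℂ) ^ 2 * ((U x : ℂ) - c) ^ 2 * ψ x) x) :
    ((∫ x in a..b, U x ^ 2 * (k ^ 2 * ‖ψ x‖ ^ 2 + ‖ψ' x‖ ^ 2) : ℝ) : ℂ)
      - 2 * c * ((∫ x in a..b, U x * (k ^ 2 * ‖ψ x‖ ^ 2 + ‖ψ' x‖ ^ 2) : ℝ) : ℂ)
      + c ^ 2 * ((∫ x in a..b, (k ^ 2 * ‖ψ x‖ ^ 2 + ‖ψ' x‖ ^ 2) : ℝ) : ℂ)
    = ((U b : ℂ) - c) ^ 2 * ψ' b * (starRingEnd ℂ) (ψ b)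
      - ((U a : ℂ) - c) ^ 2 * ψ' a * (starRingEnd ℂ) (ψ a) := by
  have hψc : ContinuousOn ψ (Icc a b) :=
    fun x hx => ((hψ x hx).continuousAt).continuousWithinAt
  set Q : ℝ → ℝ := fun x => k ^ 2 * ‖ψ x‖ ^ 2 + ‖ψ' x‖ ^ 2 with hQ
  have hQc : ContinuousOn Q (Icc a b) :=
    (continuousOn_const.mul ((hψc.norm).pow 2)).add ((hψ'c.norm).pow 2)
  have hUC : ContinuousOn (fun x => ((U x : ℂ) - c) ^ 2) (Icc a b) :=
    ((Complex.continuous_ofReal.comp_continuousOn hU).sub continuousOn_const).pow 2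
  -- key pointwise conjugation fact
  have hconj : ∀ z : ℂ, z * (starRingEnd ℂ) z = ((‖z‖ ^ 2 : ℝ) : ℂ) := by
    intro z
    rw [Complex.mul_conj]
    norm_cast
    rw [Complex.normSq_eq_norm_sq]
  -- FTC for F t = (U t - c)^2 ψ' t * conj (ψ t)
  have key : (∫ x in a..b, ((U x : ℂ) - c) ^ 2 * ((Q x : ℝ) : ℂ))
      = ((U b : ℂ) - c) ^ 2 * ψ' b * (starRingEnd ℂ) (ψ b)
        - ((U a : ℂ) - c) ^ 2 * ψ' a * (starRingEnd ℂ) (ψ a) := by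
    apply intervalIntegral.integral_eq_sub_of_hasDerivAt
    · intro x hx
      rw [uIcc_of_le hab] at hx
      have h1 : HasDerivAt (fun t => ((U t : ℂ) - c) ^ 2 * ψ' t * (starRingEnd ℂ) (ψ t))
          ((k : ℂ) ^ 2 * ((U x : ℂ) - c) ^ 2 * ψ x * (starRingEnd ℂ) (ψ x)
            + ((U x : ℂ) - c) ^ 2 * ψ' x * (starRingEnd ℂ) (ψ' x)) x := by
        have := (hode x hx).mul ((hψ x hx).star)
        exact this
      refine h1.congr_deriv (Eq.symm ?_)
      rw [hQ]
      have e1 := hconj (ψ x)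
      have e2 := hconj (ψ' x)
      push_cast at e1 e2 ⊢
      linear_combination (-((k : ℂ) ^ 2 * ((U x : ℂ) - c) ^ 2)) * e1 - ((U x : ℂ) - c) ^ 2 * e2
    · apply ContinuousOn.intervalIntegrable
      rw [uIcc_of_le hab]
      exact hUC.mul (Complex.continuous_ofReal.comp_continuousOn hQc)
  rw [← key]
  have expand : ∀ x, ((U x : ℂ) - c) ^ 2 * ((Q x : ℝ) : ℂ)
      = ((U x ^ 2 * Q x : ℝ) : ℂ) + (-(2 * c)) * ((U x * Q x : ℝ) : ℂ)
        + c ^ 2 * ((Q x : ℝ) : ℂ) := by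
    intro x; push_cast; ring
  have i1 : IntervalIntegrable (fun x => ((U x ^ 2 * Q x : ℝ) : ℂ)) volume a b := by
    apply ContinuousOn.intervalIntegrable; rw [uIcc_of_le hab]
    exact Complex.continuous_ofReal.comp_continuousOn ((hU.pow 2).mul hQc)
  have i2 : IntervalIntegrable (fun x => (-(2 * c)) * ((U x * Q x : ℝ) : ℂ)) volume a b := by
    apply ContinuousOn.intervalIntegrable; rw [uIcc_of_le hab]
    exact continuousOn_const.mul (Complex.continuous_ofReal.comp_continuousOn (hU.mul hQc))
  have i3 : IntervalIntegrable (fun x => c ^ 2 * ((Q x : ℝ) : ℂ)) volume a b := by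
    apply ContinuousOn.intervalIntegrable; rw [uIcc_of_le hab]
    exact continuousOn_const.mul (Complex.continuous_ofReal.comp_continuousOn hQc)
  calc ((∫ x in a..b, U x ^ 2 * Q x : ℝ) : ℂ)
        - 2 * c * ((∫ x in a..b, U x * Q x : ℝ) : ℂ)
        + c ^ 2 * ((∫ x in a..b, Q x : ℝ) : ℂ)
      = (∫ x in a..b, ((U x ^ 2 * Q x : ℝ) : ℂ))
        + (∫ x in a..b, (-(2 * c)) * ((U x * Q x : ℝ) : ℂ))
        + (∫ x in a..b, c ^ 2 * ((Q x : ℝ) : ℂ)) := by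
        rw [intervalIntegral.integral_const_mul, intervalIntegral.integral_const_mul,
          intervalIntegral.integral_ofReal, intervalIntegral.integral_ofReal,
          intervalIntegral.integral_ofReal]
        ring
    _ = ∫ x in a..b, ((U x : ℂ) - c) ^ 2 * ((Q x : ℝ) : ℂ) := by
        rw [← intervalIntegral.integral_add i1 i2, ← intervalIntegral.integral_add (i1.add i2) i3]
        exact intervalIntegral.integral_congr (fun x _ => (expand x).symm)
lemma parts_lemma (A B C F : ℝ) (c : ℂ) (hcI : c.im ≠ 0)
    (h : (A : ℂ) - 2 * c * (B : ℂ) + c ^ 2 * (C : ℂ) = (F : ℂ)) :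
    A = (c.re ^ 2 + c.im ^ 2) * C + F := by
  have h1 := congrArg Complex.re h
  have h2 := congrArg Complex.im h
  simp [Complex.mul_re, Complex.mul_im, pow_two] at h1 h2
  have hB : B = c.re * C := by
    have h3 : c.im * (B - c.re * C) = 0 := by linarith
    rcases mul_eq_zero.mp h3 with h4 | h4
    · exact absurd h4 hcI
    · linarith
  linear_combination h1 + 2 * c.re * hB

/-- Second-moment identity from the real parts of the integrated Rayleigh identities,
the free boundary condition, and the first-moment identity. -/
theorem second_moment_identity
    (hp hm : ℝ) (hhp : 0 < hp) (hhm : 0 < hm)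
    (ρp ρm : ℝ) (hρp : 0 < ρp) (hρm : 0 < ρm)
    (g σ k : ℝ) (hσ : 0 < σ)
    (Up Up' : ℝ → ℝ)
    (hUp : ∀ x ∈ Icc (0:ℝ) hp, HasDerivAt Up (Up' x) x)
    (hUpc : ContinuousOn Up' (Icc (0:ℝ) hp))
    (Um Um' : ℝ → ℝ)
    (hUm : ∀ x ∈ Icc (-hm) (0:ℝ), HasDerivAt Um (Um' x) x)
    (hUmc : ContinuousOn Um' (Icc (-hm) (0:ℝ)))
    (c : ℂ) (hcI : c.im ≠ 0)
    (ψp ψp' ψp'' ψm ψm' ψm'' : ℝ → ℂ)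
    (hψp : ∀ x ∈ Icc (0:ℝ) hp, HasDerivAt ψp (ψp' x) x)
    (hψp' : ∀ x ∈ Icc (0:ℝ) hp, HasDerivAt ψp' (ψp'' x) x)
    (hψpc : ContinuousOn ψp'' (Icc (0:ℝ) hp))
    (hψm : ∀ x ∈ Icc (-hm) (0:ℝ), HasDerivAt ψm (ψm' x) x)
    (hψm' : ∀ x ∈ Icc (-hm) (0:ℝ), HasDerivAt ψm' (ψm'' x) x)
    (hψmc : ContinuousOn ψm'' (Icc (-hm) (0:ℝ)))
    (hodep : ∀ x ∈ Icc (0:ℝ) hp,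
      HasDerivAt (fun t => ((Up t : ℂ) - c) ^ 2 * ψp' t)
        ((k : ℂ) ^ 2 * ((Up x : ℂ) - c) ^ 2 * ψp x) x)
    (hodem : ∀ x ∈ Icc (-hm) (0:ℝ),
      HasDerivAt (fun t => ((Um t : ℂ) - c) ^ 2 * ψm' t)
        ((k : ℂ) ^ 2 * ((Um x : ℂ) - c) ^ 2 * ψm x) x)
    (hbp : ψp hp = 0) (hbm : ψm (-hm) = 0)
    (hnp : ψp 0 = -1) (hnm : ψm 0 = -1)
    (hfb : ((-g * (ρp - ρm) + σ * k ^ 2 : ℝ) : ℂ)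
      = (ρp : ℂ) * ((Up 0 : ℂ) - c) ^ 2 * ψp' 0
        - (ρm : ℂ) * ((Um 0 : ℂ) - c) ^ 2 * ψm' 0) :
    (∫ x in (0:ℝ)..hp, ρp * Up x ^ 2 * (k ^ 2 * ‖ψp x‖ ^ 2 + ‖ψp' x‖ ^ 2))
      + ∫ x in (-hm)..0, ρm * Um x ^ 2 * (k ^ 2 * ‖ψm x‖ ^ 2 + ‖ψm' x‖ ^ 2)
    = (c.re ^ 2 + c.im ^ 2)
        * ((∫ x in (0:ℝ)..hp, ρp * (k ^ 2 * ‖ψp x‖ ^ 2 + ‖ψp' x‖ ^ 2))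
          + ∫ x in (-hm)..0, ρm * (k ^ 2 * ‖ψm x‖ ^ 2 + ‖ψm' x‖ ^ 2))
      - g * (ρp - ρm) + σ * k ^ 2 := by
  have hUpcont : ContinuousOn Up (Icc (0:ℝ) hp) :=
    fun x hx => ((hUp x hx).continuousAt).continuousWithinAt
  have hUmcont : ContinuousOn Um (Icc (-hm) (0:ℝ)) :=
    fun x hx => ((hUm x hx).continuousAt).continuousWithinAt
  have hψp'c : ContinuousOn ψp' (Icc (0:ℝ) hp) :=
    fun x hx => ((hψp' x hx).continuousAt).continuousWithinAt
  have hψm'c : ContinuousOn ψm' (Icc (-hm) (0:ℝ)) :=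
    fun x hx => ((hψm' x hx).continuousAt).continuousWithinAt
  have eqp := moment_identity 0 hp hhp.le k c Up ψp ψp' hUpcont hψp hψp'c hodep
  have eqm := moment_identity (-hm) 0 (by linarith) k c Um ψm ψm' hUmcont hψm hψm'c hodem
  rw [hbp, hnp] at eqp
  rw [hbm, hnm] at eqm
  simp only [map_zero, map_neg, map_one, mul_zero, mul_neg, mul_one, zero_sub, neg_neg,
    sub_zero] at eqp eqm
  set Ap := ∫ x in (0:ℝ)..hp, Up x ^ 2 * (k ^ 2 * ‖ψp x‖ ^ 2 + ‖ψp' x‖ ^ 2) with hAp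
  set Bp := ∫ x in (0:ℝ)..hp, Up x * (k ^ 2 * ‖ψp x‖ ^ 2 + ‖ψp' x‖ ^ 2) with hBp
  set Cp := ∫ x in (0:ℝ)..hp, (k ^ 2 * ‖ψp x‖ ^ 2 + ‖ψp' x‖ ^ 2) with hCp
  set Am := ∫ x in (-hm)..0, Um x ^ 2 * (k ^ 2 * ‖ψm x‖ ^ 2 + ‖ψm' x‖ ^ 2) with hAm
  set Bm := ∫ x in (-hm)..0, Um x * (k ^ 2 * ‖ψm x‖ ^ 2 + ‖ψm' x‖ ^ 2) with hBm
  set Cm := ∫ x in (-hm)..0, (k ^ 2 * ‖ψm x‖ ^ 2 + ‖ψm' x‖ ^ 2) with hCm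
  have E : ((ρp * Ap + ρm * Am : ℝ) : ℂ) - 2 * c * ((ρp * Bp + ρm * Bm : ℝ) : ℂ)
      + c ^ 2 * ((ρp * Cp + ρm * Cm : ℝ) : ℂ)
      = ((-g * (ρp - ρm) + σ * k ^ 2 : ℝ) : ℂ) := by
    have hfb' := hfb
    push_cast at hfb' ⊢
    linear_combination (ρp : ℂ) * eqp + (ρm : ℂ) * eqm - hfb'
  have key := parts_lemma (ρp * Ap + ρm * Am) (ρp * Bp + ρm * Bm) (ρp * Cp + ρm * Cm)
    (-g * (ρp - ρm) + σ * k ^ 2) c hcI E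
  have g1 : (∫ x in (0:ℝ)..hp, ρp * Up x ^ 2 * (k ^ 2 * ‖ψp x‖ ^ 2 + ‖ψp' x‖ ^ 2))
      = ρp * Ap := by
    rw [hAp, ← intervalIntegral.integral_const_mul]
    exact intervalIntegral.integral_congr fun x _ => by ring
  have g2 : (∫ x in (-hm)..0, ρm * Um x ^ 2 * (k ^ 2 * ‖ψm x‖ ^ 2 + ‖ψm' x‖ ^ 2))
      = ρm * Am := by
    rw [hAm, ← intervalIntegral.integral_const_mul]
    exact intervalIntegral.integral_congr fun x _ => by ring
  have g3 : (∫ x in (0:ℝ)..hp, ρp * (k ^ 2 * ‖ψp x‖ ^ 2 + ‖ψp' x‖ ^ 2)) = ρp * Cp := by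
    rw [hCp, ← intervalIntegral.integral_const_mul]
  have g4 : (∫ x in (-hm)..0, ρm * (k ^ 2 * ‖ψm x‖ ^ 2 + ‖ψm' x‖ ^ 2)) = ρm * Cm := by
    rw [hCm, ← intervalIntegral.integral_const_mul]
  rw [g1, g2, g3, g4]
  linarith [key]
end

section
/- Let h₋ > 0, U⁻ ∈ C²([−h₋, 0]; ℝ), and k ∈ ℝ. For c ∈ ℝ \ U⁻([−h₋, 0]), let y⁻(c, k, ·) be the unique solution on [−h₋, 0] of the Rayleigh equation −y'' + (k² + (U⁻)''/(U⁻ − c)) y = 0 with y(−h₋) = 0, y'(−h₋) = 1. Then y⁻(c, k, 0) ≠ 0, and the function c ↦ Y⁻(c, k) := (y⁻)'(c, k, 0)/y⁻(c, k, 0) is differentiable on the open set ℝ \ U⁻([−h₋, 0]) with ∂_c Y⁻(c, k) = y⁻(c, k, 0)^{−2} ∫_{−h₋}^{0} ( (U⁻)''(x) / (U⁻(x) − c)² ) y⁻(c, k, x)² dx. In particular, if (U⁻)'' > 0 on [−h₋, 0], then ∂_c Y⁻(c, k) > 0 for all such c. -/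
open Set MeasureTheory intervalIntegral


lemma my_integral_pos {g : ℝ → ℝ} {a b p : ℝ} (hab : a < b)
    (hp : p ∈ Ico a b) (hg : ContinuousOn g (Icc a b))
    (hnn : ∀ x ∈ Icc a b, 0 ≤ g x) (hpos : 0 < g p) :
    0 < ∫ x in a..b, g x := by
  have hpIcc : p ∈ Icc a b := Ico_subset_Icc_self hp
  have hint : ∀ u v : ℝ, a ≤ u → u ≤ v → v ≤ b → IntervalIntegrable g volume u v := by
    intro u v hu huv hv
    exact (hg.mono (Icc_subset_Icc hu hv)).intervalIntegrable_of_Icc huv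
  -- find δ
  have hcw : ContinuousWithinAt g (Icc a b) p := hg p hpIcc
  have hev : ∀ᶠ x in nhdsWithin p (Icc a b), 0 < g x :=
    hcw.eventually (eventually_gt_nhds hpos)
  rw [eventually_nhdsWithin_iff] at hev
  obtain ⟨δ, hδ0, hδ⟩ := Metric.eventually_nhds_iff.mp hev
  set t := min (p + δ) b with ht
  have hpt : p < t := lt_min (by linarith) hp.2
  have htb : t ≤ b := min_le_right _ _
  have hpos' : ∀ x ∈ Ioo p t, 0 < g x := by
    intro x hx
    have hx1 : x ∈ Icc a b := ⟨le_trans hpIcc.1 hx.1.le, le_trans hx.2.le htb⟩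
    have : dist x p < δ := by
      rw [Real.dist_eq, abs_of_pos (by linarith [hx.1])]
      have := lt_of_lt_of_le hx.2 (min_le_left _ _)
      linarith
    exact hδ this hx1
  have h1 : 0 < ∫ x in p..t, g x :=
    intervalIntegral_pos_of_pos_on (hint p t hpIcc.1 hpt.le htb) hpos' hpt
  have h2 : 0 ≤ ∫ x in a..p, g x :=
    intervalIntegral.integral_nonneg hpIcc.1
      (fun u hu => hnn u ⟨hu.1, le_trans hu.2 hpIcc.2⟩)
  have h3 : 0 ≤ ∫ x in t..b, g x :=
    intervalIntegral.integral_nonneg htb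
      (fun u hu => hnn u ⟨le_trans hpIcc.1 (le_trans hpt.le hu.1), hu.2⟩)
  have e1 : ∫ x in a..b, g x = (∫ x in a..p, g x) + ((∫ x in p..t, g x) + ∫ x in t..b, g x) := by
    rw [integral_add_adjacent_intervals (hint p t hpIcc.1 hpt.le htb) (hint t b (le_trans hpIcc.1 hpt.le) htb le_rfl)]
    rw [integral_add_adjacent_intervals (hint a p le_rfl hpIcc.1 hpIcc.2) (hint p b hpIcc.1 hpIcc.2 le_rfl)]
  rw [e1]
  linarith


lemma rayleigh_end_ne_zero (hm : ℝ) (hhm : 0 < hm)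
    (Um Um' Um'' : ℝ → ℝ)
    (hUm : ∀ x ∈ Icc (-hm) (0:ℝ), HasDerivAt Um (Um' x) x)
    (hUm' : ∀ x ∈ Icc (-hm) (0:ℝ), HasDerivAt Um' (Um'' x) x)
    (hUmc : ContinuousOn Um'' (Icc (-hm) (0:ℝ)))
    (k c : ℝ) (hc : ∀ x ∈ Icc (-hm) (0:ℝ), Um x ≠ c)
    (f f' f'' : ℝ → ℝ)
    (hf : ∀ x ∈ Icc (-hm) (0:ℝ),
        HasDerivAt f (f' x) x ∧ HasDerivAt f' (f'' x) x ∧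
        -f'' x + (k ^ 2 + Um'' x / (Um x - c)) * f x = 0)
    (h0 : f (-hm) = 0) (h1 : f' (-hm) = 1) : f 0 ≠ 0 := by
  intro hcon
  have hmem0 : (0:ℝ) ∈ Icc (-hm) (0:ℝ) := ⟨by linarith, le_rfl⟩
  have hmemm : -hm ∈ Icc (-hm) (0:ℝ) := ⟨le_rfl, by linarith⟩
  set W : ℝ → ℝ := fun x => f' x * (Um x - c) - Um' x * f x with hWdef
  set g : ℝ → ℝ := fun x => k ^ 2 * f x ^ 2 + W x ^ 2 / (Um x - c) ^ 2 with hgdef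
  -- derivative of E = W * (f/(U-c)) is g
  have hE : ∀ x ∈ Icc (-hm) (0:ℝ),
      HasDerivAt (fun x => W x * (f x / (Um x - c))) (g x) x := by
    intro x hx
    obtain ⟨hf1, hf2, heq⟩ := hf x hx
    have hU := hUm x hx
    have hU' := hUm' x hx
    have hne : Um x - c ≠ 0 := sub_ne_zero.mpr (hc x hx)
    have hW : HasDerivAt W
        (f'' x * (Um x - c) + f' x * Um' x - (Um'' x * f x + Um' x * f' x)) x :=
      (hf2.mul (hU.sub_const c)).sub (hU'.mul hf1)
    have hφ : HasDerivAt (fun x => f x / (Um x - c))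
        ((f' x * (Um x - c) - f x * Um' x) / (Um x - c) ^ 2) x :=
      hf1.div (hU.sub_const c) hne
    have hprod := hW.mul hφ
    refine hprod.congr_deriv (Eq.symm ?_)
    have heq' : f'' x = k ^ 2 * f x + Um'' x / (Um x - c) * f x := by linarith
    rw [heq']
    simp only [hgdef, hWdef]
    field_simp
    ring
  have hcontf : ContinuousOn f (Icc (-hm) (0:ℝ)) :=
    fun x hx => ((hf x hx).1).continuousAt.continuousWithinAt
  have hcontf' : ContinuousOn f' (Icc (-hm) (0:ℝ)) :=
    fun x hx => ((hf x hx).2.1).continuousAt.continuousWithinAt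
  have hcontU : ContinuousOn Um (Icc (-hm) (0:ℝ)) :=
    fun x hx => (hUm x hx).continuousAt.continuousWithinAt
  have hcontU' : ContinuousOn Um' (Icc (-hm) (0:ℝ)) :=
    fun x hx => (hUm' x hx).continuousAt.continuousWithinAt
  have hcontg : ContinuousOn g (Icc (-hm) (0:ℝ)) := by
    apply ContinuousOn.add
    · exact (continuousOn_const.mul ((hcontf.pow 2)))
    · apply ContinuousOn.div
      · exact ((hcontf'.mul (hcontU.sub continuousOn_const)).sub (hcontU'.mul hcontf)).pow 2
      · exact (hcontU.sub continuousOn_const).pow 2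
      · intro x hx
        exact pow_ne_zero 2 (sub_ne_zero.mpr (hc x hx))
  have huIcc : uIcc (-hm) (0:ℝ) = Icc (-hm) 0 := uIcc_of_le (by linarith)
  have hkey := integral_eq_sub_of_hasDerivAt (fun x hx => hE x (huIcc ▸ hx))
    ((huIcc ▸ hcontg : ContinuousOn g (uIcc (-hm) 0)).intervalIntegrable)
  have hzero : ∫ x in (-hm)..0, g x = 0 := by
    rw [hkey, hcon, h0]; simp
  have hgnn : ∀ x ∈ Icc (-hm) (0:ℝ), 0 ≤ g x := by
    intro x hx; positivity
  have hgpos : 0 < g (-hm) := by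
    have hne : Um (-hm) - c ≠ 0 := sub_ne_zero.mpr (hc _ hmemm)
    have : g (-hm) = k ^ 2 * 0 ^ 2 + ((Um (-hm) - c)) ^ 2 / (Um (-hm) - c) ^ 2 := by
      simp only [hgdef, hWdef, h0, h1]; ring_nf
    rw [this, div_self (pow_ne_zero 2 hne)]
    nlinarith [sq_nonneg k]
  have := my_integral_pos (by linarith : -hm < (0:ℝ)) ⟨le_rfl, by linarith⟩ hcontg hgnn hgpos
  rw [hzero] at this
  exact lt_irrefl 0 this

set_option maxHeartbeats 2000000 in
/-- Derivative in `c` of `Y⁻(c, k) = (y⁻)'(c,k,0)/y⁻(c,k,0)` for the lower fundamental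
solution of the Rayleigh equation, for real `c` off the range of `U⁻`. -/
theorem deriv_c_Y_minus
    (hm : ℝ) (hhm : 0 < hm)
    (Um Um' Um'' : ℝ → ℝ)
    (hUm : ∀ x ∈ Icc (-hm) (0:ℝ), HasDerivAt Um (Um' x) x)
    (hUm' : ∀ x ∈ Icc (-hm) (0:ℝ), HasDerivAt Um' (Um'' x) x)
    (hUmc : ContinuousOn Um'' (Icc (-hm) (0:ℝ)))
    (k : ℝ)
    (y y' y'' : ℝ → ℝ → ℝ)
    (hsol : ∀ c : ℝ, (∀ x ∈ Icc (-hm) (0:ℝ), Um x ≠ c) →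
      (∀ x ∈ Icc (-hm) (0:ℝ),
        HasDerivAt (y c) (y' c x) x ∧ HasDerivAt (y' c) (y'' c x) x ∧
        -y'' c x + (k ^ 2 + Um'' x / (Um x - c)) * y c x = 0) ∧
      y c (-hm) = 0 ∧ y' c (-hm) = 1) :
    ∀ c : ℝ, (∀ x ∈ Icc (-hm) (0:ℝ), Um x ≠ c) →
      y c 0 ≠ 0 ∧
      HasDerivAt (fun c' => y' c' 0 / y c' 0)
        ((∫ x in (-hm)..0, Um'' x / (Um x - c) ^ 2 * y c x ^ 2) / y c 0 ^ 2) c ∧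
      ((∀ x ∈ Icc (-hm) (0:ℝ), 0 < Um'' x) →
        0 < (∫ x in (-hm)..0, Um'' x / (Um x - c) ^ 2 * y c x ^ 2) / y c 0 ^ 2) := by
  intro c hc
  have hIcc0 : (0:ℝ) ∈ Icc (-hm) (0:ℝ) := ⟨by linarith, le_rfl⟩
  have hIccm : -hm ∈ Icc (-hm) (0:ℝ) := ⟨le_rfl, by linarith⟩
  obtain ⟨hode, hy0, hy1⟩ := hsol c hc
  have contUm : ContinuousOn Um (Icc (-hm) (0:ℝ)) :=
    fun x hx => (hUm x hx).continuousAt.continuousWithinAt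
  have hcy : ∀ (c' : ℝ), (∀ x ∈ Icc (-hm) (0:ℝ), Um x ≠ c') →
      ContinuousOn (y c') (Icc (-hm) (0:ℝ)) :=
    fun c' hc' x hx => ((hsol c' hc').1 x hx).1.continuousAt.continuousWithinAt
  -- distance from c to the range of Um
  obtain ⟨x0, hx0S, hx0min⟩ := isCompact_Icc.exists_isMinOn
    (nonempty_Icc.mpr (by linarith : -hm ≤ (0:ℝ)))
    ((contUm.sub continuousOn_const).abs)
  set d : ℝ := |Um x0 - c| with hddef
  have hd0 : 0 < d := abs_pos.mpr (sub_ne_zero.mpr (hc x0 hx0S))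
  have hdmin : ∀ x ∈ Icc (-hm) (0:ℝ), d ≤ |Um x - c| := fun x hx => hx0min hx
  -- sup bound for Um''
  obtain ⟨M, hM⟩ := isCompact_Icc.exists_bound_of_continuousOn hUmc
  have hM' : ∀ x ∈ Icc (-hm) (0:ℝ), |Um'' x| ≤ M := fun x hx => hM x hx
  have hM0 : 0 ≤ M := le_trans (abs_nonneg _) (hM' 0 hIcc0)
  -- sup bound for |Um - c|
  obtain ⟨D, hD⟩ := isCompact_Icc.exists_bound_of_continuousOn (contUm.sub continuousOn_const)
  have hD' : ∀ x ∈ Icc (-hm) (0:ℝ), |Um x - c| ≤ D := fun x hx => hD x hx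
  have hD0 : 0 < D := lt_of_lt_of_le hd0 (hD' x0 hx0S)
  set K : ℝ := k ^ 2 + 2 * M / d + 1 with hKdef
  have hK1 : 1 ≤ K := by
    have h1 : 0 ≤ 2 * M / d := by positivity
    rw [hKdef]
    nlinarith [sq_nonneg k]
  have hK0 : 0 < K := by linarith
  set B : ℝ := Real.exp (K * hm) with hBdef
  have hB0 : 0 < B := Real.exp_pos _
  have hB1 : 1 ≤ B := Real.one_le_exp (by positivity)
  -- facts about the closed ball
  have hcb : ∀ c' ∈ Metric.closedBall c (d / 2), ∀ x ∈ Icc (-hm) (0:ℝ),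
      d / 2 ≤ |Um x - c'| := by
    intro c' hc' x hx
    have h1 := hdmin x hx
    have h2 : |c' - c| ≤ d / 2 := by
      rw [Metric.mem_closedBall, Real.dist_eq] at hc'; exact hc'
    have h3 : |Um x - c| ≤ |Um x - c'| + |c' - c| := by
      calc |Um x - c| = |(Um x - c') + (c' - c)| := by ring_nf
        _ ≤ |Um x - c'| + |c' - c| := abs_add_le _ _
    linarith
  have hcbne : ∀ c' ∈ Metric.closedBall c (d / 2), ∀ x ∈ Icc (-hm) (0:ℝ), Um x ≠ c' := by
    intro c' hc' x hx
    have := hcb c' hc' x hx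
    intro h
    rw [h] at this
    simp at this
    linarith
  have hccb : c ∈ Metric.closedBall c (d / 2) := Metric.mem_closedBall_self (by positivity)
  have hqb : ∀ c' ∈ Metric.closedBall c (d / 2), ∀ x ∈ Icc (-hm) (0:ℝ),
      |Um'' x / (Um x - c')| ≤ 2 * M / d := by
    intro c' hc' x hx
    rw [abs_div]
    calc |Um'' x| / |Um x - c'| ≤ M / (d / 2) :=
          div_le_div₀ hM0 (hM' x hx) (by linarith) (hcb c' hc' x hx)
      _ = 2 * M / d := by field_simp
  -- generic Gronwall estimate
  have gron : ∀ (F F' : ℝ → ℝ × ℝ) (δ ε : ℝ), 0 ≤ δ → 0 ≤ ε →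
      (∀ x ∈ Icc (-hm) (0:ℝ), HasDerivAt F (F' x) x) → ‖F (-hm)‖ ≤ δ →
      (∀ x ∈ Icc (-hm) (0:ℝ), ‖F' x‖ ≤ K * ‖F x‖ + ε) →
      ∀ x ∈ Icc (-hm) (0:ℝ), ‖F x‖ ≤ (δ + ε) * B := by
    intro F F' δ ε hδ hε hder ha hbound x hx
    have hcF : ContinuousOn F (Icc (-hm) (0:ℝ)) :=
      fun t ht => (hder t ht).continuousAt.continuousWithinAt
    have key := norm_le_gronwallBound_of_norm_deriv_right_le (a := -hm) (b := 0)
      hcF (fun t ht => (hder t (Ico_subset_Icc_self ht)).hasDerivWithinAt)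
      ha (fun t ht => hbound t (Ico_subset_Icc_self ht)) x hx
    have hKne : K ≠ 0 := ne_of_gt hK0
    rw [gronwallBound_of_K_ne_0 hKne] at key
    have hs0 : 0 ≤ x - (-hm) := by linarith [hx.1]
    have hs1 : x - (-hm) ≤ hm := by linarith [hx.2]
    have he1 : Real.exp (K * (x - (-hm))) ≤ B := by
      rw [hBdef]
      exact Real.exp_le_exp.mpr (by nlinarith)
    have he0 : 1 ≤ Real.exp (K * (x - (-hm))) := Real.one_le_exp (by positivity)
    have hεK : ε / K ≤ ε := div_le_self hε hK1
    calc ‖F x‖ ≤ δ * Real.exp (K * (x - (-hm))) + ε / K * (Real.exp (K * (x - (-hm))) - 1) := key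
      _ ≤ δ * B + ε * B := by
          have h1 : δ * Real.exp (K * (x - (-hm))) ≤ δ * B := by nlinarith
          have h2 : ε / K * (Real.exp (K * (x - (-hm))) - 1) ≤ ε * B := by
            have : ε / K * (Real.exp (K * (x - (-hm))) - 1) ≤ ε * (Real.exp (K * (x - (-hm))) - 1) := by
              apply mul_le_mul_of_nonneg_right hεK (by linarith)
            nlinarith
          linarith
      _ = (δ + ε) * B := by ring
  -- uniform bound on solutions
  have hyB : ∀ c' ∈ Metric.closedBall c (d / 2), ∀ x ∈ Icc (-hm) (0:ℝ),
      |y c' x| ≤ B ∧ |y' c' x| ≤ B := by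
    intro c' hc'
    obtain ⟨ode', h0', h1'⟩ := hsol c' (hcbne c' hc')
    have key := gron (fun t => (y c' t, y' c' t)) (fun t => (y' c' t, y'' c' t)) 1 0
      (by norm_num) le_rfl
      (fun t ht => ((ode' t ht).1.prodMk (ode' t ht).2.1))
      (by rw [Prod.norm_def]; simp [h0', h1'])
      ?_
    · intro x hx
      have := key x hx
      rw [Prod.norm_def] at this
      simp only [Real.norm_eq_abs] at this
      constructor
      · calc |y c' x| ≤ max |y c' x| |y' c' x| := le_max_left _ _
          _ ≤ (1 + 0) * B := this
          _ = B := by ring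
      · calc |y' c' x| ≤ max |y c' x| |y' c' x| := le_max_right _ _
          _ ≤ (1 + 0) * B := this
          _ = B := by ring
    · intro x hx
      obtain ⟨hd1, hd2, heq⟩ := ode' x hx
      have h2 : y'' c' x = (k ^ 2 + Um'' x / (Um x - c')) * y c' x := by linarith
      rw [Prod.norm_def, Prod.norm_def]
      simp only [Real.norm_eq_abs]
      have hq := hqb c' hc' x hx
      have hy'' : |y'' c' x| ≤ (k ^ 2 + 2 * M / d) * |y c' x| := by
        rw [h2, abs_mul]
        apply mul_le_mul_of_nonneg_right _ (abs_nonneg _)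
        calc |k ^ 2 + Um'' x / (Um x - c')| ≤ |k ^ 2| + |Um'' x / (Um x - c')| := abs_add_le _ _
          _ ≤ k ^ 2 + 2 * M / d := by rw [abs_of_nonneg (sq_nonneg k)]; linarith
      have hnn1 : |y c' x| ≤ max |y c' x| |y' c' x| := le_max_left _ _
      have hnn2 : |y' c' x| ≤ max |y c' x| |y' c' x| := le_max_right _ _
      have hnn0 : 0 ≤ max |y c' x| |y' c' x| := le_trans (abs_nonneg _) hnn1
      apply max_le
      · calc |y' c' x| ≤ max |y c' x| |y' c' x| := hnn2
          _ ≤ K * max |y c' x| |y' c' x| := le_mul_of_one_le_left hnn0 hK1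
          _ ≤ K * max |y c' x| |y' c' x| + 0 := by linarith
      · have hstep : (k ^ 2 + 2 * M / d) * |y c' x| ≤ (k ^ 2 + 2 * M / d) * max |y c' x| |y' c' x| := by
          apply mul_le_mul_of_nonneg_left hnn1 (by positivity)
        calc |y'' c' x| ≤ (k ^ 2 + 2 * M / d) * |y c' x| := hy''
          _ ≤ (k ^ 2 + 2 * M / d) * max |y c' x| |y' c' x| := hstep
          _ ≤ K * max |y c' x| |y' c' x| := mul_le_mul_of_nonneg_right (by rw [hKdef]; linarith) hnn0
          _ ≤ K * max |y c' x| |y' c' x| + 0 := by linarith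
  -- Lipschitz estimate in c'
  set C1 : ℝ := 2 * M * B / d ^ 2 * B with hC1def
  have hC10 : 0 ≤ C1 := by rw [hC1def]; positivity
  have hlip : ∀ c' ∈ Metric.closedBall c (d / 2), ∀ x ∈ Icc (-hm) (0:ℝ),
      |y c' x - y c x| ≤ C1 * |c' - c| ∧ |y' c' x - y' c x| ≤ C1 * |c' - c| := by
    intro c' hc'
    obtain ⟨ode', h0', h1'⟩ := hsol c' (hcbne c' hc')
    set ε : ℝ := 2 * M * B / d ^ 2 * |c' - c| with hεdef
    have hε0 : 0 ≤ ε := by rw [hεdef]; positivity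
    have key := gron (fun t => (y c' t - y c t, y' c' t - y' c t))
      (fun t => (y' c' t - y' c t, y'' c' t - y'' c t)) 0 ε le_rfl hε0
      (fun t ht => (((ode' t ht).1.sub (hode t ht).1).prodMk
        ((ode' t ht).2.1.sub (hode t ht).2.1)))
      (by rw [Prod.norm_def]; simp [h0', h1', hy0, hy1])
      ?_
    · intro x hx
      have hk := key x hx
      rw [Prod.norm_def] at hk
      simp only [Real.norm_eq_abs] at hk
      have heqε : (0 + ε) * B = C1 * |c' - c| := by rw [hεdef, hC1def]; ring
      constructor
      · calc |y c' x - y c x| ≤ max |y c' x - y c x| |y' c' x - y' c x| := le_max_left _ _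
          _ ≤ (0 + ε) * B := hk
          _ = C1 * |c' - c| := heqε
      · calc |y' c' x - y' c x| ≤ max |y c' x - y c x| |y' c' x - y' c x| := le_max_right _ _
          _ ≤ (0 + ε) * B := hk
          _ = C1 * |c' - c| := heqε
    · intro x hx
      obtain ⟨hd1', hd2', heq'⟩ := ode' x hx
      obtain ⟨hd1c, hd2c, heqc⟩ := hode x hx
      have hne' : Um x - c' ≠ 0 := sub_ne_zero.mpr (hcbne c' hc' x hx)
      have hnec : Um x - c ≠ 0 := sub_ne_zero.mpr (hc x hx)
      have e2' : y'' c' x = (k ^ 2 + Um'' x / (Um x - c')) * y c' x := by linarith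
      have e2c : y'' c x = (k ^ 2 + Um'' x / (Um x - c)) * y c x := by linarith
      have hid : y'' c' x - y'' c x
          = (k ^ 2 + Um'' x / (Um x - c)) * (y c' x - y c x)
            + (Um'' x / (Um x - c') - Um'' x / (Um x - c)) * y c' x := by
        rw [e2', e2c]; ring
      have hqq : |Um'' x / (Um x - c') - Um'' x / (Um x - c)| ≤ 2 * M / d ^ 2 * |c' - c| := by
        have hid2 : Um'' x / (Um x - c') - Um'' x / (Um x - c)
            = Um'' x * (c' - c) / ((Um x - c') * (Um x - c)) := by
          field_simp
          ring
        rw [hid2, abs_div, abs_mul]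
        have hden : d / 2 * d ≤ |Um x - c'| * |Um x - c| :=
          mul_le_mul (hcb c' hc' x hx) (hdmin x hx) hd0.le (abs_nonneg _)
        calc |Um'' x| * |c' - c| / |(Um x - c') * (Um x - c)|
            = |Um'' x| * |c' - c| / (|Um x - c'| * |Um x - c|) := by rw [abs_mul]
          _ ≤ M * |c' - c| / (d / 2 * d) := div_le_div₀ (by positivity)
              (mul_le_mul_of_nonneg_right (hM' x hx) (abs_nonneg _)) (by positivity) hden
          _ = 2 * M / d ^ 2 * |c' - c| := by field_simp
      have hqc := hqb c hccb x hx
      have hyBc' := (hyB c' hc' x hx).1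
      rw [Prod.norm_def, Prod.norm_def]
      simp only [Real.norm_eq_abs]
      have hnn1 : |y c' x - y c x| ≤ max |y c' x - y c x| |y' c' x - y' c x| := le_max_left _ _
      have hnn2 : |y' c' x - y' c x| ≤ max |y c' x - y c x| |y' c' x - y' c x| := le_max_right _ _
      have hnn0 : 0 ≤ max |y c' x - y c x| |y' c' x - y' c x| :=
        le_trans (abs_nonneg _) hnn1
      apply max_le
      · calc |y' c' x - y' c x| ≤ max |y c' x - y c x| |y' c' x - y' c x| := hnn2
          _ ≤ K * max |y c' x - y c x| |y' c' x - y' c x| := le_mul_of_one_le_left hnn0 hK1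
          _ ≤ K * max |y c' x - y c x| |y' c' x - y' c x| + ε := by linarith
      · have habs1 : |k ^ 2 + Um'' x / (Um x - c)| ≤ k ^ 2 + 2 * M / d := by
          calc |k ^ 2 + Um'' x / (Um x - c)| ≤ |k ^ 2| + |Um'' x / (Um x - c)| := abs_add_le _ _
            _ ≤ k ^ 2 + 2 * M / d := by rw [abs_of_nonneg (sq_nonneg k)]; linarith
        calc |y'' c' x - y'' c x|
            ≤ |k ^ 2 + Um'' x / (Um x - c)| * |y c' x - y c x|
              + |Um'' x / (Um x - c') - Um'' x / (Um x - c)| * |y c' x| := by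
              have habsadd := abs_add_le ((k ^ 2 + Um'' x / (Um x - c)) * (y c' x - y c x))
                ((Um'' x / (Um x - c') - Um'' x / (Um x - c)) * y c' x)
              rw [abs_mul, abs_mul] at habsadd
              rw [hid]
              exact habsadd
          _ ≤ (k ^ 2 + 2 * M / d) * max |y c' x - y c x| |y' c' x - y' c x|
              + (2 * M / d ^ 2 * |c' - c|) * B := by
              have t1 : |k ^ 2 + Um'' x / (Um x - c)| * |y c' x - y c x|
                  ≤ (k ^ 2 + 2 * M / d) * max |y c' x - y c x| |y' c' x - y' c x| :=
                mul_le_mul habs1 hnn1 (abs_nonneg _) (by positivity)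
              have t2 : |Um'' x / (Um x - c') - Um'' x / (Um x - c)| * |y c' x|
                  ≤ (2 * M / d ^ 2 * |c' - c|) * B :=
                mul_le_mul hqq hyBc' (abs_nonneg _) (by positivity)
              linarith
          _ ≤ K * max |y c' x - y c x| |y' c' x - y' c x| + ε := by
              have t3 : (k ^ 2 + 2 * M / d) * max |y c' x - y c x| |y' c' x - y' c x|
                  ≤ K * max |y c' x - y c x| |y' c' x - y' c x| :=
                mul_le_mul_of_nonneg_right (by rw [hKdef]; linarith) hnn0
              have t4 : (2 * M / d ^ 2 * |c' - c|) * B = ε := by rw [hεdef]; ring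
              linarith
  have huIcc : uIcc (-hm) (0:ℝ) = Icc (-hm) 0 := uIcc_of_le (by linarith)
  -- the integrand and its integral
  set P : ℝ → ℝ → ℝ := fun c' x => Um'' x / ((Um x - c') * (Um x - c)) * (y c' x * y c x)
    with hPdef
  have hPcont : ∀ c' ∈ Metric.closedBall c (d / 2), ContinuousOn (P c') (Icc (-hm) (0:ℝ)) := by
    intro c' hc'
    apply ContinuousOn.mul
    · apply ContinuousOn.div hUmc
      · exact (contUm.sub continuousOn_const).mul (contUm.sub continuousOn_const)
      · intro x hx
        exact mul_ne_zero (sub_ne_zero.mpr (hcbne c' hc' x hx)) (sub_ne_zero.mpr (hc x hx))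
    · exact (hcy c' (hcbne c' hc')).mul (hcy c hc)
  have hPint : ∀ c' ∈ Metric.closedBall c (d / 2), IntervalIntegrable (P c') volume (-hm) 0 :=
    fun c' hc' =>
      ((huIcc ▸ hPcont c' hc' : ContinuousOn (P c') (uIcc (-hm) 0))).intervalIntegrable
  set N : ℝ → ℝ := fun c' => ∫ x in (-hm)..0, P c' x with hNdef
  -- Wronskian identity
  have hWid : ∀ c' ∈ Metric.closedBall c (d / 2),
      y' c' 0 * y c 0 - y c' 0 * y' c 0 = (c' - c) * N c' := by
    intro c' hc'
    obtain ⟨ode', h0', h1'⟩ := hsol c' (hcbne c' hc')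
    have hG : ∀ x ∈ Icc (-hm) (0:ℝ),
        HasDerivAt (fun t => y' c' t * y c t - y c' t * y' c t) ((c' - c) * P c' x) x := by
      intro x hx
      obtain ⟨hd1', hd2', heq'⟩ := ode' x hx
      obtain ⟨hd1c, hd2c, heqc⟩ := hode x hx
      have hne' : Um x - c' ≠ 0 := sub_ne_zero.mpr (hcbne c' hc' x hx)
      have hnec : Um x - c ≠ 0 := sub_ne_zero.mpr (hc x hx)
      have hder := (hd2'.mul hd1c).sub (hd1'.mul hd2c)
      refine hder.congr_deriv (Eq.symm ?_)
      have e2' : y'' c' x = (k ^ 2 + Um'' x / (Um x - c')) * y c' x := by linarith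
      have e2c : y'' c x = (k ^ 2 + Um'' x / (Um x - c)) * y c x := by linarith
      show (c' - c) * (Um'' x / ((Um x - c') * (Um x - c)) * (y c' x * y c x)) = _
      rw [e2', e2c]
      field_simp
      ring
    have hcont1 : ContinuousOn (fun x => (c' - c) * P c' x) (Icc (-hm) (0:ℝ)) :=
      continuousOn_const.mul (hPcont c' hc')
    have hftc := integral_eq_sub_of_hasDerivAt (fun x hx => hG x (huIcc ▸ hx))
      ((huIcc ▸ hcont1 : ContinuousOn _ (uIcc (-hm) 0)).intervalIntegrable)
    rw [intervalIntegral.integral_const_mul] at hftc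
    have hend : y' c' (-hm) * y c (-hm) - y c' (-hm) * y' c (-hm) = 0 := by
      rw [h0', hy0, h1', hy1]; ring
    have hNc' : N c' = ∫ x in (-hm)..0, P c' x := rfl
    rw [hNc']
    linarith
  -- Lipschitz bound for N
  set C2 : ℝ := M * (C1 * B * D + B * B) / (d / 2 * d ^ 2) * hm with hC2def
  have hNlip : ∀ c' ∈ Metric.closedBall c (d / 2), |N c' - N c| ≤ C2 * |c' - c| := by
    intro c' hc'
    have hsub : N c' - N c = ∫ x in (-hm)..0, (P c' x - P c x) :=
      (intervalIntegral.integral_sub (hPint c' hc') (hPint c hccb)).symm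
    have hbd : ∀ x ∈ Set.uIoc (-hm) (0:ℝ),
        ‖P c' x - P c x‖ ≤ M * (C1 * B * D + B * B) / (d / 2 * d ^ 2) * |c' - c| := by
      intro x hx'
      have hx : x ∈ Icc (-hm) (0:ℝ) := by
        rw [uIoc_of_le (by linarith : -hm ≤ (0:ℝ))] at hx'
        exact Ioc_subset_Icc_self hx'
      have hne' : Um x - c' ≠ 0 := sub_ne_zero.mpr (hcbne c' hc' x hx)
      have hnec : Um x - c ≠ 0 := sub_ne_zero.mpr (hc x hx)
      have hid : P c' x - P c x
          = Um'' x * ((y c' x - y c x) * y c x * (Um x - c) + y c x ^ 2 * (c' - c))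
            / ((Um x - c') * (Um x - c) ^ 2) := by
        show Um'' x / ((Um x - c') * (Um x - c)) * (y c' x * y c x)
            - Um'' x / ((Um x - c) * (Um x - c)) * (y c x * y c x) = _
        field_simp
        ring
      rw [Real.norm_eq_abs, hid, abs_div, abs_mul]
      have hyBc := (hyB c hccb x hx).1
      have hnum : |(y c' x - y c x) * y c x * (Um x - c) + y c x ^ 2 * (c' - c)|
          ≤ C1 * |c' - c| * B * D + B * B * |c' - c| := by
        have u1 : |(y c' x - y c x) * y c x * (Um x - c)| ≤ C1 * |c' - c| * B * D := by
          rw [abs_mul, abs_mul]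
          exact mul_le_mul
            (mul_le_mul (hlip c' hc' x hx).1 hyBc (abs_nonneg _) (by positivity))
            (hD' x hx) (abs_nonneg _) (by positivity)
        have u2 : |y c x ^ 2 * (c' - c)| ≤ B * B * |c' - c| := by
          rw [abs_mul, abs_pow]
          have h2 : |y c x| ^ 2 ≤ B * B := by nlinarith [abs_nonneg (y c x)]
          exact mul_le_mul h2 le_rfl (abs_nonneg _) (by positivity)
        calc |(y c' x - y c x) * y c x * (Um x - c) + y c x ^ 2 * (c' - c)|
            ≤ |(y c' x - y c x) * y c x * (Um x - c)| + |y c x ^ 2 * (c' - c)| := abs_add_le _ _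
          _ ≤ C1 * |c' - c| * B * D + B * B * |c' - c| := by linarith
      have hden : d / 2 * d ^ 2 ≤ |(Um x - c') * (Um x - c) ^ 2| := by
        rw [abs_mul, abs_pow]
        exact mul_le_mul (hcb c' hc' x hx) (pow_le_pow_left₀ hd0.le (hdmin x hx) 2)
          (by positivity) (abs_nonneg _)
      calc |Um'' x| * |(y c' x - y c x) * y c x * (Um x - c) + y c x ^ 2 * (c' - c)|
            / |(Um x - c') * (Um x - c) ^ 2|
          ≤ M * (C1 * |c' - c| * B * D + B * B * |c' - c|) / (d / 2 * d ^ 2) :=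
            div_le_div₀ (by positivity)
              (mul_le_mul (hM' x hx) hnum (abs_nonneg _) hM0) (by positivity) hden
        _ = M * (C1 * B * D + B * B) / (d / 2 * d ^ 2) * |c' - c| := by ring
    have hle := intervalIntegral.norm_integral_le_of_norm_le_const hbd
    rw [← hsub] at hle
    have h00 : |(0:ℝ) - (-hm)| = hm := by
      rw [sub_neg_eq_add, zero_add, abs_of_pos hhm]
    rw [h00, Real.norm_eq_abs] at hle
    calc |N c' - N c| ≤ M * (C1 * B * D + B * B) / (d / 2 * d ^ 2) * |c' - c| * hm := hle
      _ = C2 * |c' - c| := by rw [hC2def]; ring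
  -- endpoint nonvanishing
  have hne0 : ∀ c' : ℝ, (∀ x ∈ Icc (-hm) (0:ℝ), Um x ≠ c') → y c' 0 ≠ 0 := by
    intro c' hc'
    obtain ⟨ode', h0', h1'⟩ := hsol c' hc'
    exact rayleigh_end_ne_zero hm hhm Um Um' Um'' hUm hUm' hUmc k c' hc'
      (y c') (y' c') (y'' c') ode' h0' h1'
  have hne1 : y c 0 ≠ 0 := hne0 c hc
  -- eventual slope identity
  have hballmem : Metric.closedBall c (d / 2) ∈ nhdsWithin c {c}ᶜ :=
    nhdsWithin_le_nhds (Metric.closedBall_mem_nhds c (by positivity))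
  have hball_ev : ∀ᶠ c' in nhdsWithin c {c}ᶜ, c' ∈ Metric.closedBall c (d / 2) :=
    Filter.eventually_of_mem hballmem fun _ h => h
  have hslope_eq : ∀ᶠ c' in nhdsWithin c {c}ᶜ,
      slope (fun c' => y' c' 0 / y c' 0) c c' = N c' / (y c' 0 * y c 0) := by
    filter_upwards [hball_ev, self_mem_nhdsWithin] with c' hcb' hne'
    have hnec' : c' ≠ c := hne'
    have hy'ne : y c' 0 ≠ 0 := hne0 c' (hcbne c' hcb')
    have hW := hWid c' hcb'
    rw [slope_def_field]
    have hcc : c' - c ≠ 0 := sub_ne_zero.mpr hnec'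
    field_simp
    linear_combination hW
  have htendC : ∀ C : ℝ, Filter.Tendsto (fun c' : ℝ => C * |c' - c|)
      (nhdsWithin c {c}ᶜ) (nhds 0) := by
    intro C
    have hcont := (continuous_const.mul
      ((continuous_id.sub continuous_const).abs) : Continuous fun c' : ℝ => C * |c' - c|).tendsto c
    simpa [Pi.mul_def] using hcont.mono_left nhdsWithin_le_nhds
  have htendN : Filter.Tendsto N (nhdsWithin c {c}ᶜ) (nhds (N c)) := by
    have h1 : Filter.Tendsto (fun c' => N c' - N c) (nhdsWithin c {c}ᶜ) (nhds 0) :=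
      squeeze_zero_norm' (by
        filter_upwards [hball_ev] with c' hcb'
        rw [Real.norm_eq_abs]
        exact hNlip c' hcb') (htendC C2)
    simpa using h1.add_const (N c)
  have htendy : Filter.Tendsto (fun c' => y c' 0) (nhdsWithin c {c}ᶜ) (nhds (y c 0)) := by
    have h1 : Filter.Tendsto (fun c' => y c' 0 - y c 0) (nhdsWithin c {c}ᶜ) (nhds 0) :=
      squeeze_zero_norm' (by
        filter_upwards [hball_ev] with c' hcb'
        rw [Real.norm_eq_abs]
        exact (hlip c' hcb' 0 hIcc0).1) (htendC C1)
    simpa using h1.add_const (y c 0)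
  have htendD : Filter.Tendsto (fun c' => N c' / (y c' 0 * y c 0)) (nhdsWithin c {c}ᶜ)
      (nhds (N c / (y c 0 * y c 0))) :=
    htendN.div (htendy.mul tendsto_const_nhds) (mul_ne_zero hne1 hne1)
  have hval : N c / (y c 0 * y c 0)
      = (∫ x in (-hm)..0, Um'' x / (Um x - c) ^ 2 * y c x ^ 2) / y c 0 ^ 2 := by
    have hNum : N c = ∫ x in (-hm)..0, Um'' x / (Um x - c) ^ 2 * y c x ^ 2 := by
      apply intervalIntegral.integral_congr
      intro x hx
      show Um'' x / ((Um x - c) * (Um x - c)) * (y c x * y c x)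
          = Um'' x / (Um x - c) ^ 2 * y c x ^ 2
      ring
    rw [hNum, sq]
  have hderiv : HasDerivAt (fun c' => y' c' 0 / y c' 0)
      ((∫ x in (-hm)..0, Um'' x / (Um x - c) ^ 2 * y c x ^ 2) / y c 0 ^ 2) c := by
    rw [hasDerivAt_iff_tendsto_slope, ← hval]
    have hslope_eq' : (fun c' => N c' / (y c' 0 * y c 0))
        =ᶠ[nhdsWithin c {c}ᶜ] (slope (fun c' => y' c' 0 / y c' 0) c) := by
      filter_upwards [hslope_eq] with c' h
      exact h.symm
    exact htendD.congr' hslope_eq'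
  refine ⟨hne1, hderiv, ?_⟩
  intro hpos
  -- find a point where y c is positive
  have hyd : HasDerivAt (y c) 1 (-hm) := by
    have := (hode (-hm) hIccm).1
    rwa [hy1] at this
  have hslope := hasDerivAt_iff_tendsto_slope.mp hyd
  have hev := hslope.eventually (eventually_gt_nhds (zero_lt_one))
  have hmono : nhdsWithin (-hm) (Ioi (-hm)) ≤ nhdsWithin (-hm) ({-hm}ᶜ : Set ℝ) :=
    nhdsWithin_mono _ fun x hx => by simpa using (LT.lt.ne' hx)
  have hIooev : Ioo (-hm) (0:ℝ) ∈ nhdsWithin (-hm) (Ioi (-hm)) :=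
    Ioo_mem_nhdsGT_of_mem ⟨le_rfl, by linarith⟩
  have hev' : ∀ᶠ x in nhdsWithin (-hm) (Ioi (-hm)), 0 < slope (y c) (-hm) x := hmono hev
  obtain ⟨p, hp1, hp2⟩ := (hev'.and
    (Filter.eventually_of_mem hIooev fun x hx => hx)).exists
  have hpd : 0 < p - (-hm) := by have := hp2.1; linarith
  have hyp : 0 < y c p := by
    rw [slope_def_field, hy0, sub_zero] at hp1
    have := mul_pos hp1 hpd
    rwa [div_mul_cancel₀ _ (ne_of_gt hpd)] at this
  have hy2pos : 0 < y c 0 ^ 2 := by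
    rcases hne1.lt_or_gt with h | h <;> nlinarith
  apply div_pos _ hy2pos
  refine my_integral_pos (by linarith : -hm < (0:ℝ)) ⟨hp2.1.le, hp2.2⟩ ?_ ?_ ?_
  · exact (hUmc.div ((contUm.sub continuousOn_const).pow 2)
      (fun x hx => pow_ne_zero 2 (sub_ne_zero.mpr (hc x hx)))).mul ((hcy c hc).pow 2)
  · intro x hx
    have h1 := (hpos x hx).le
    have h2 := sub_ne_zero.mpr (hc x hx)
    positivity
  · have hpIcc : p ∈ Icc (-hm) (0:ℝ) := ⟨hp2.1.le, hp2.2.le⟩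
    have h1 := hpos p hpIcc
    have h2 := sub_ne_zero.mpr (hc p hpIcc)
    have h3 : 0 < (Um p - c) ^ 2 := by
      rcases h2.lt_or_gt with h | h <;> nlinarith
    exact mul_pos (div_pos h1 h3) (by nlinarith)
end

section
/- Let h₋ > 0, U⁻ ∈ C²([−h₋, 0]; ℝ), and c ∈ ℝ \ U⁻([−h₋, 0]). For K ≥ 0 let y⁻(c, √K, ·) be the unique solution on [−h₋, 0] of −y'' + (K + (U⁻)''/(U⁻ − c)) y = 0 with y(−h₋) = 0, y'(−h₋) = 1, and define G(K) := (y⁻)'(c, √K, 0)/y⁻(c, √K, 0). Then y⁻(c, √K, 0) ≠ 0 for all K ≥ 0, G is differentiable on [0, ∞), and G'(K) = y⁻(c, √K, 0)^{−2} ∫_{−h₋}^{0} y⁻(c, √K, x)² dx > 0 for every K ≥ 0. -/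
open Set MeasureTheory intervalIntegral

private lemma contOn_of_deriv {s : Set ℝ} {f f' : ℝ → ℝ}
    (h : ∀ x ∈ s, HasDerivAt f (f' x) x) : ContinuousOn f s :=
  fun x hx => ((h x hx).continuousAt).continuousWithinAt

private lemma zeroIcc_of_nonneg_deriv {a b : ℝ} (hab : a < b) {F F' : ℝ → ℝ}
    (hc : ContinuousOn F (Icc a b))
    (hF : ∀ x ∈ Ioo a b, HasDerivAt F (F' x) x)
    (hnn : ∀ x ∈ Ioo a b, 0 ≤ F' x)
    (hFa : F a = 0) (hFb : F b = 0) :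
    ∀ x ∈ Icc a b, F x = 0 := by
  have hmono : MonotoneOn F (Icc a b) := by
    apply monotoneOn_of_deriv_nonneg (convex_Icc a b) hc
    · rw [interior_Icc]
      exact fun x hx => ((hF x hx).differentiableAt).differentiableWithinAt
    · rw [interior_Icc]
      intro x hx; rw [(hF x hx).deriv]; exact hnn x hx
  intro x hx
  have h1 := hmono (left_mem_Icc.2 hab.le) hx hx.1
  have h2 := hmono hx (right_mem_Icc.2 hab.le) hx.2
  rw [hFa] at h1; rw [hFb] at h2; linarith

private lemma derivZero_of_zeroIoo {a b : ℝ} {F F' : ℝ → ℝ}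
    (hz : ∀ x ∈ Ioo a b, F x = 0)
    (hF : ∀ x ∈ Ioo a b, HasDerivAt F (F' x) x) :
    ∀ x ∈ Ioo a b, F' x = 0 := by
  intro x hx
  have h0 : HasDerivAt F 0 x := by
    have heq : F =ᶠ[nhds x] fun _ => (0:ℝ) :=
      Filter.eventuallyEq_of_mem (isOpen_Ioo.mem_nhds hx) hz
    exact (hasDerivAt_const x (0:ℝ)).congr_of_eventuallyEq heq
  exact (hF x hx).unique h0

private lemma zeroIcc_of_deriv_zero {a b : ℝ} (hab : a < b) {F F' : ℝ → ℝ}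
    (hc : ContinuousOn F (Icc a b))
    (hF : ∀ x ∈ Ioo a b, HasDerivAt F (F' x) x)
    (h0 : ∀ x ∈ Ioo a b, F' x = 0)
    (hFa : F a = 0) :
    ∀ x ∈ Icc a b, F x = 0 := by
  have hdiff : DifferentiableOn ℝ F (interior (Icc a b)) := by
    rw [interior_Icc]
    exact fun x hx => ((hF x hx).differentiableAt).differentiableWithinAt
  have hd0 : ∀ x ∈ interior (Icc a b), deriv F x = 0 := by
    rw [interior_Icc]
    intro x hx; rw [(hF x hx).deriv]; exact h0 x hx
  have hmono : MonotoneOn F (Icc a b) :=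
    monotoneOn_of_deriv_nonneg (convex_Icc a b) hc hdiff (fun x hx => (hd0 x hx).ge)
  have hanti : AntitoneOn F (Icc a b) :=
    antitoneOn_of_deriv_nonpos (convex_Icc a b) hc hdiff (fun x hx => (hd0 x hx).le)
  intro x hx
  have h1 := hmono (left_mem_Icc.2 hab.le) hx hx.1
  have h2 := hanti (left_mem_Icc.2 hab.le) hx hx.1
  rw [hFa] at h1 h2; linarith

private lemma not_deriv_one {a b : ℝ} (hab : a < b) {f : ℝ → ℝ} {d : ℝ}
    (hf : HasDerivAt f d a)
    (hz : ∀ x ∈ Icc a b, f x = 0)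
    (h1 : d = 1) : False := by
  have hu : UniqueDiffWithinAt ℝ (Icc a b) a := (uniqueDiffOn_Icc hab) a (left_mem_Icc.2 hab.le)
  have h2 : HasDerivWithinAt f 0 (Icc a b) a := by
    refine (hasDerivWithinAt_const a (Icc a b) (0:ℝ)).congr (fun y hy => hz y hy) ?_
    exact hz a (left_mem_Icc.2 hab.le)
  have := hu.eq_deriv _ hf.hasDerivWithinAt h2
  rw [h1] at this; norm_num at this

private lemma nonvanish {a b : ℝ} (hab : a < b)
    (Um Um' Um'' : ℝ → ℝ)
    (hUm : ∀ x ∈ Icc a b, HasDerivAt Um (Um' x) x)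
    (hUm' : ∀ x ∈ Icc a b, HasDerivAt Um' (Um'' x) x)
    (c : ℝ) (hc : ∀ x ∈ Icc a b, Um x ≠ c)
    (K : ℝ) (hK : 0 ≤ K)
    (f f' f'' : ℝ → ℝ)
    (hode : ∀ x ∈ Icc a b,
      HasDerivAt f (f' x) x ∧ HasDerivAt f' (f'' x) x ∧
      f'' x = (K + Um'' x / (Um x - c)) * f x)
    (hfa : f a = 0) (hf'a : f' a = 1) : f b ≠ 0 := by
  intro hfb
  set u : ℝ → ℝ := fun x => Um x - c with hu_def
  have hu : ∀ x ∈ Icc a b, u x ≠ 0 := fun x hx => sub_ne_zero.2 (hc x hx)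
  set φ : ℝ → ℝ := fun x => f x / u x with hφ_def
  set φd : ℝ → ℝ := fun x => (f' x * u x - f x * Um' x) / (u x) ^ 2 with hφd_def
  set ψ : ℝ → ℝ := fun x => f' x * u x - f x * Um' x with hψ_def
  set F : ℝ → ℝ := fun x => ψ x * φ x with hF_def
  set Fd : ℝ → ℝ := fun x => K * f x ^ 2 + ψ x ^ 2 / u x ^ 2 with hFd_def
  have hud : ∀ x ∈ Icc a b, HasDerivAt u (Um' x) x := fun x hx => (hUm x hx).sub_const c
  have hφd : ∀ x ∈ Icc a b, HasDerivAt φ (φd x) x := fun x hx =>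
    ((hode x hx).1).div (hud x hx) (hu x hx)
  have hψd : ∀ x ∈ Icc a b, HasDerivAt ψ (f'' x * u x - f x * Um'' x) x := by
    intro x hx
    have h1 := ((hode x hx).2.1).mul (hud x hx)
    have h2 := ((hode x hx).1).mul (hUm' x hx)
    refine (h1.sub h2).congr_deriv (Eq.symm ?_)
    ring
  have hFd' : ∀ x ∈ Icc a b, HasDerivAt F (Fd x) x := by
    intro x hx
    have h := (hψd x hx).mul (hφd x hx)
    refine h.congr_deriv (Eq.symm ?_)
    have hx2 := (hode x hx).2.2
    have hune := hu x hx
    have key : f'' x * u x = K * f x * u x + f x * Um'' x := by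
      rw [hx2, show Um x - c = u x from rfl]
      field_simp
    have key2 : f'' x * u x - f x * Um'' x = K * f x * u x := by linarith
    simp only [hφ_def, hφd_def, hψ_def, hFd_def]
    rw [key2]
    field_simp
  have hFa : F a = 0 := by simp [hF_def, hφ_def, hfa]
  have hFb : F b = 0 := by simp [hF_def, hφ_def, hfb]
  have hFzero : ∀ x ∈ Icc a b, F x = 0 := by
    apply zeroIcc_of_nonneg_deriv hab
      (contOn_of_deriv hFd')
      (fun x hx => hFd' x (Ioo_subset_Icc_self hx))
      (fun x hx => ?_) hFa hFb
    have h1 : (0:ℝ) ≤ K * f x ^ 2 := mul_nonneg hK (sq_nonneg _)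
    have h2 : (0:ℝ) ≤ ψ x ^ 2 / u x ^ 2 := div_nonneg (sq_nonneg _) (sq_nonneg _)
    simp only [hFd_def]; linarith
  have hFdzero : ∀ x ∈ Ioo a b, Fd x = 0 :=
    derivZero_of_zeroIoo (fun x hx => hFzero x (Ioo_subset_Icc_self hx)) (fun x hx => hFd' x (Ioo_subset_Icc_self hx))
  have hψzero : ∀ x ∈ Ioo a b, ψ x = 0 := by
    intro x hx
    have h := hFdzero x hx
    have h1 : (0:ℝ) ≤ K * f x ^ 2 := mul_nonneg hK (sq_nonneg _)
    have h2 : (0:ℝ) ≤ ψ x ^ 2 / u x ^ 2 := div_nonneg (sq_nonneg _) (sq_nonneg _)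
    have h3 : ψ x ^ 2 / u x ^ 2 = 0 := by simp only [hFd_def] at h; linarith
    have hune := hu x (Ioo_subset_Icc_self hx)
    have := (div_eq_zero_iff.1 h3).resolve_right (pow_ne_zero 2 hune)
    exact pow_eq_zero_iff two_ne_zero |>.1 this
  have hφzero : ∀ x ∈ Icc a b, φ x = 0 := by
    apply zeroIcc_of_deriv_zero hab (contOn_of_deriv hφd)
      (fun x hx => hφd x (Ioo_subset_Icc_self hx))
      (fun x hx => ?_) (by simp [hφ_def, hfa])
    simp only [hφd_def]
    rw [show f' x * u x - f x * Um' x = ψ x from rfl, hψzero x hx, zero_div]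
  have hfzero : ∀ x ∈ Icc a b, f x = 0 := by
    intro x hx
    have := hφzero x hx
    simp only [hφ_def] at this
    exact (div_eq_zero_iff.1 this).resolve_right (hu x hx)
  exact not_deriv_one hab (hode a (left_mem_Icc.2 hab.le)).1 hfzero hf'a

/-- Lipschitz dependence of the solution on the parameter, via Gronwall. -/
private lemma lip_dep {a : ℝ} (hab : a < 0) {q : ℝ → ℝ} {C0 : ℝ} (hC0 : 1 ≤ C0)
    {K K' M : ℝ}
    {f f' f'' g g' g'' : ℝ → ℝ}
    (hf : ∀ x ∈ Icc a (0:ℝ), HasDerivAt f (f' x) x ∧ HasDerivAt f' (f'' x) x ∧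
      f'' x = (K + q x) * f x)
    (hg : ∀ x ∈ Icc a (0:ℝ), HasDerivAt g (g' x) x ∧ HasDerivAt g' (g'' x) x ∧
      g'' x = (K' + q x) * g x)
    (hfa : f a = 0) (hga : g a = 0) (hf'a : f' a = 1) (hg'a : g' a = 1)
    (hbound : ∀ x ∈ Icc a (0:ℝ), |K' + q x| ≤ C0)
    (hMf : ∀ x ∈ Icc a (0:ℝ), |f x| ≤ M) :
    ∀ x ∈ Icc a (0:ℝ), |g x - f x| ≤ |K' - K| * M * (Real.exp (C0 * (-a)) / C0) := by
  have hC0pos : (0 : ℝ) < C0 := lt_of_lt_of_le one_pos hC0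
  have hM0 : 0 ≤ M := le_trans (abs_nonneg _) (hMf a (left_mem_Icc.2 hab.le))
  set ε : ℝ := |K' - K| * M with hε_def
  have hε0 : 0 ≤ ε := mul_nonneg (abs_nonneg _) hM0
  set F : ℝ → ℝ × ℝ := fun x => (g x - f x, g' x - f' x) with hF_def
  set Fd : ℝ → ℝ × ℝ := fun x => (g' x - f' x, g'' x - f'' x) with hFd_def
  have hFdAt : ∀ x ∈ Icc a (0:ℝ), HasDerivAt F (Fd x) x := fun x hx =>
    ((hg x hx).1.sub (hf x hx).1).prodMk ((hg x hx).2.1.sub (hf x hx).2.1)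
  have hFc : ContinuousOn F (Icc a 0) := fun x hx => ((hFdAt x hx).continuousAt).continuousWithinAt
  have hFd' : ∀ x ∈ Ico a (0:ℝ), HasDerivWithinAt F (Fd x) (Ici x) x := fun x hx =>
    (hFdAt x (Ico_subset_Icc_self hx)).hasDerivWithinAt
  have hFa : ‖F a‖ ≤ 0 := by
    simp [hF_def, hfa, hga, hf'a, hg'a, Prod.norm_def]
  have hb : ∀ x ∈ Ico a (0:ℝ), ‖Fd x‖ ≤ C0 * ‖F x‖ + ε := by
    intro x hx
    have hx' : x ∈ Icc a (0:ℝ) := Ico_subset_Icc_self hx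
    have hzpp : g'' x - f'' x = (K' + q x) * (g x - f x) + (K' - K) * f x := by
      rw [(hg x hx').2.2, (hf x hx').2.2]; ring
    have h1 : |g' x - f' x| ≤ ‖F x‖ := le_max_right _ _
    have h2 : |g x - f x| ≤ ‖F x‖ := le_max_left _ _
    have hnn : (0:ℝ) ≤ ‖F x‖ := norm_nonneg _
    have h3 : |g'' x - f'' x| ≤ C0 * ‖F x‖ + ε := by
      rw [hzpp]
      calc |(K' + q x) * (g x - f x) + (K' - K) * f x|
          ≤ |(K' + q x) * (g x - f x)| + |(K' - K) * f x| := abs_add_le _ _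
        _ = |K' + q x| * |g x - f x| + |K' - K| * |f x| := by rw [abs_mul, abs_mul]
        _ ≤ C0 * ‖F x‖ + |K' - K| * M :=
            add_le_add (mul_le_mul (hbound x hx') h2 (abs_nonneg _) hC0pos.le)
              (mul_le_mul_of_nonneg_left (hMf x hx') (abs_nonneg _))
        _ = C0 * ‖F x‖ + ε := rfl
    have h4 : |g' x - f' x| ≤ C0 * ‖F x‖ + ε := by nlinarith
    exact max_le h4 h3
  have hG := norm_le_gronwallBound_of_norm_deriv_right_le hFc hFd' hFa hb
  intro x hx
  have h5 : |g x - f x| ≤ ‖F x‖ := le_max_left _ _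
  have h6 : gronwallBound 0 C0 ε (x - a) ≤ ε * (Real.exp (C0 * (-a)) / C0) := by
    rw [gronwallBound_of_K_ne_0 (ne_of_gt hC0pos)]
    have hxa : C0 * (x - a) ≤ C0 * (-a) := by
      have := hx.2; nlinarith
    have hexp : Real.exp (C0 * (x - a)) - 1 ≤ Real.exp (C0 * (-a)) :=
      le_trans (by linarith [Real.exp_pos (C0 * (x - a))]) (Real.exp_le_exp.2 hxa)
    have hdiv : 0 ≤ ε / C0 := div_nonneg hε0 hC0pos.le
    calc (0:ℝ) * Real.exp (C0 * (x - a)) + ε / C0 * (Real.exp (C0 * (x - a)) - 1)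
        = ε / C0 * (Real.exp (C0 * (x - a)) - 1) := by ring
      _ ≤ ε / C0 * Real.exp (C0 * (-a)) := mul_le_mul_of_nonneg_left hexp hdiv
      _ = ε * (Real.exp (C0 * (-a)) / C0) := by ring
  calc |g x - f x| ≤ ‖F x‖ := h5
    _ ≤ gronwallBound 0 C0 ε (x - a) := hG x hx
    _ ≤ ε * (Real.exp (C0 * (-a)) / C0) := h6
    _ = |K' - K| * M * (Real.exp (C0 * (-a)) / C0) := by rw [hε_def]

/-- Wronskian identity. -/
private lemma wronsk {a : ℝ} (hab : a ≤ 0) {q : ℝ → ℝ}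
    {K K' : ℝ}
    {f f' f'' g g' g'' : ℝ → ℝ}
    (hf : ∀ x ∈ Icc a (0:ℝ), HasDerivAt f (f' x) x ∧ HasDerivAt f' (f'' x) x ∧
      f'' x = (K + q x) * f x)
    (hg : ∀ x ∈ Icc a (0:ℝ), HasDerivAt g (g' x) x ∧ HasDerivAt g' (g'' x) x ∧
      g'' x = (K' + q x) * g x)
    (hfa : f a = 0) (hga : g a = 0) (hf'a : f' a = 1) (hg'a : g' a = 1) :
    g' 0 * f 0 - g 0 * f' 0 = (K' - K) * ∫ x in a..(0:ℝ), g x * f x := by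
  have huIcc : uIcc a (0:ℝ) = Icc a 0 := uIcc_of_le hab
  set W : ℝ → ℝ := fun x => g' x * f x - g x * f' x with hW_def
  set Wd : ℝ → ℝ := fun x => (K' - K) * (g x * f x) with hWd_def
  have hWdAt : ∀ x ∈ uIcc a (0:ℝ), HasDerivAt W (Wd x) x := by
    rw [huIcc]
    intro x hx
    have h := ((hg x hx).2.1.mul (hf x hx).1).sub ((hg x hx).1.mul (hf x hx).2.1)
    refine h.congr_deriv (Eq.symm ?_)
    rw [hWd_def]
    simp only
    rw [(hg x hx).2.2, (hf x hx).2.2]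
    ring
  have hWint : IntervalIntegrable Wd volume a 0 := by
    apply ContinuousOn.intervalIntegrable
    rw [huIcc]
    exact (continuousOn_const.mul ((contOn_of_deriv (fun x hx => (hg x hx).1)).mul
      (contOn_of_deriv (fun x hx => (hf x hx).1))))
  have hFTC := intervalIntegral.integral_eq_sub_of_hasDerivAt hWdAt hWint
  have hWa : W a = 0 := by simp [hW_def, hfa, hga]
  have hInt : ∫ x in a..(0:ℝ), Wd x = (K' - K) * ∫ x in a..(0:ℝ), g x * f x := by
    rw [hWd_def]
    exact intervalIntegral.integral_const_mul _ _
  rw [hInt, hWa, sub_zero] at hFTC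
  exact hFTC.symm

/-- Derivative in `K = k²` of `Y⁻(c, √K)` for the lower fundamental solution:
it is positive for every `K ≥ 0`. -/
theorem deriv_K_Y_minus
    (hm : ℝ) (hhm : 0 < hm)
    (Um Um' Um'' : ℝ → ℝ)
    (hUm : ∀ x ∈ Icc (-hm) (0:ℝ), HasDerivAt Um (Um' x) x)
    (hUm' : ∀ x ∈ Icc (-hm) (0:ℝ), HasDerivAt Um' (Um'' x) x)
    (hUmc : ContinuousOn Um'' (Icc (-hm) (0:ℝ)))
    (c : ℝ) (hc : ∀ x ∈ Icc (-hm) (0:ℝ), Um x ≠ c)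
    (y y' y'' : ℝ → ℝ → ℝ)
    (hsol : ∀ K ∈ Ici (0:ℝ),
      (∀ x ∈ Icc (-hm) (0:ℝ),
        HasDerivAt (y K) (y' K x) x ∧ HasDerivAt (y' K) (y'' K x) x ∧
        -y'' K x + (K + Um'' x / (Um x - c)) * y K x = 0) ∧
      y K (-hm) = 0 ∧ y' K (-hm) = 1) :
    ∀ K ∈ Ici (0:ℝ),
      y K 0 ≠ 0 ∧
      HasDerivWithinAt (fun K' => y' K' 0 / y K' 0)
        ((∫ x in (-hm)..0, y K x ^ 2) / y K 0 ^ 2) (Ici 0) K ∧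
      0 < (∫ x in (-hm)..0, y K x ^ 2) / y K 0 ^ 2 := by
  intro K hK
  have hK0 : (0:ℝ) ≤ K := hK
  have hab : -hm < 0 := neg_lt_zero.2 hhm
  have hmem0 : (0:ℝ) ∈ Icc (-hm) (0:ℝ) := right_mem_Icc.2 hab.le
  have hmema : -hm ∈ Icc (-hm) (0:ℝ) := left_mem_Icc.2 hab.le
  set q : ℝ → ℝ := fun x => Um'' x / (Um x - c) with hq_def
  -- reformulated solutions
  have hsol' : ∀ K₁ ∈ Ici (0:ℝ), (∀ x ∈ Icc (-hm) (0:ℝ),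
      HasDerivAt (y K₁) (y' K₁ x) x ∧ HasDerivAt (y' K₁) (y'' K₁ x) x ∧
      y'' K₁ x = (K₁ + q x) * y K₁ x) ∧ y K₁ (-hm) = 0 ∧ y' K₁ (-hm) = 1 := by
    intro K₁ hK₁
    obtain ⟨h1, h2, h3⟩ := hsol K₁ hK₁
    refine ⟨fun x hx => ⟨(h1 x hx).1, (h1 x hx).2.1, ?_⟩, h2, h3⟩
    have := (h1 x hx).2.2
    simp only [hq_def]
    linarith
  -- nonvanishing at the right endpoint for all parameters
  have hnv : ∀ K₁ ∈ Ici (0:ℝ), y K₁ 0 ≠ 0 := by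
    intro K₁ hK₁
    exact nonvanish hab Um Um' Um'' hUm hUm' c hc K₁ hK₁ (y K₁) (y' K₁) (y'' K₁)
      (hsol' K₁ hK₁).1 (hsol' K₁ hK₁).2.1 (hsol' K₁ hK₁).2.2
  have hnvK : y K 0 ≠ 0 := hnv K hK
  -- continuity of solutions
  have hyc : ∀ K₁ ∈ Ici (0:ℝ), ContinuousOn (y K₁) (Icc (-hm) (0:ℝ)) := fun K₁ hK₁ =>
    contOn_of_deriv (fun x hx => ((hsol' K₁ hK₁).1 x hx).1)
  -- bounds
  have hqc : ContinuousOn q (Icc (-hm) (0:ℝ)) := by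
    apply hUmc.div ((contOn_of_deriv hUm).sub continuousOn_const)
    exact fun x hx => sub_ne_zero.2 (hc x hx)
  obtain ⟨C, hC⟩ := isCompact_Icc.exists_bound_of_continuousOn hqc
  have hCnn : 0 ≤ C := le_trans (norm_nonneg _) (hC (-hm) hmema)
  set C0 : ℝ := 1 + (K + 1) + C with hC0_def
  have hC0 : 1 ≤ C0 := by simp only [hC0_def]; linarith
  have hC0pos : (0:ℝ) < C0 := lt_of_lt_of_le one_pos hC0
  obtain ⟨M, hM⟩ := isCompact_Icc.exists_bound_of_continuousOn (hyc K hK)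
  have hM' : ∀ x ∈ Icc (-hm) (0:ℝ), |y K x| ≤ M := by
    intro x hx; have := hM x hx; rwa [Real.norm_eq_abs] at this
  have hM0 : 0 ≤ M := le_trans (abs_nonneg _) (hM' (-hm) hmema)
  set L : ℝ := M * (Real.exp (C0 * hm) / C0) with hL_def
  have hL0 : 0 ≤ L := mul_nonneg hM0 (div_nonneg (Real.exp_pos _).le hC0pos.le)
  -- Lipschitz dependence on the parameter
  have hlip : ∀ K' ∈ Ici (0:ℝ), |K' - K| ≤ 1 →
      ∀ x ∈ Icc (-hm) (0:ℝ), |y K' x - y K x| ≤ |K' - K| * L := by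
    intro K' hK' hKK' x hx
    have hbd : ∀ z ∈ Icc (-hm) (0:ℝ), |K' + q z| ≤ C0 := by
      intro z hz
      have h1 : |K' + q z| ≤ |K'| + |q z| := abs_add_le _ _
      have h2 : |K'| = K' := abs_of_nonneg hK'
      have h3 : K' ≤ K + 1 := by
        have := (abs_le.1 hKK').2; linarith
      have h4 := hC z hz
      rw [Real.norm_eq_abs] at h4
      simp only [hC0_def]; linarith
    have := lip_dep hab hC0 (hsol' K hK).1 (hsol' K' hK').1
      (hsol' K hK).2.1 (hsol' K' hK').2.1 (hsol' K hK).2.2 (hsol' K' hK').2.2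
      hbd hM' x hx
    rw [neg_neg] at this
    calc |y K' x - y K x| ≤ |K' - K| * M * (Real.exp (C0 * hm) / C0) := this
      _ = |K' - K| * L := by rw [hL_def]; ring
  -- integrals
  set I : ℝ := ∫ x in (-hm)..0, y K x ^ 2 with hI_def
  set N : ℝ → ℝ := fun K' => ∫ x in (-hm)..0, y K' x * y K x with hN_def
  have huIcc : uIcc (-hm) (0:ℝ) = Icc (-hm) 0 := uIcc_of_le hab.le
  have huIoc : uIoc (-hm) (0:ℝ) = Ioc (-hm) 0 := uIoc_of_le hab.le
  have intI : IntervalIntegrable (fun x => y K x ^ 2) volume (-hm) 0 := by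
    apply ContinuousOn.intervalIntegrable; rw [huIcc]; exact (hyc K hK).pow 2
  have intN : ∀ K' ∈ Ici (0:ℝ),
      IntervalIntegrable (fun x => y K' x * y K x) volume (-hm) 0 := by
    intro K' hK'
    apply ContinuousOn.intervalIntegrable; rw [huIcc]
    exact (hyc K' hK').mul (hyc K hK)
  -- filter basics
  have ev1 : ∀ᶠ K' in nhdsWithin K (Ici (0:ℝ)), |K' - K| ≤ 1 := by
    apply Filter.Eventually.filter_mono nhdsWithin_le_nhds
    filter_upwards [Metric.closedBall_mem_nhds K one_pos] with K' h
    rw [← Real.dist_eq]; exact Metric.mem_closedBall.1 h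
  have evs : ∀ᶠ K' in nhdsWithin K (Ici (0:ℝ)), K' ∈ Ici (0:ℝ) := eventually_mem_nhdsWithin
  have tend0 : Filter.Tendsto (fun K' : ℝ => |K' - K|) (nhdsWithin K (Ici (0:ℝ))) (nhds 0) := by
    have h : Filter.Tendsto (fun K' : ℝ => |K' - K|) (nhds K) (nhds |K - K|) :=
      (Filter.Tendsto.sub Filter.tendsto_id tendsto_const_nhds).abs
    rw [sub_self, abs_zero] at h
    exact h.mono_left nhdsWithin_le_nhds
  -- convergence of the boundary value
  have tendz : Filter.Tendsto (fun K' => y K' 0) (nhdsWithin K (Ici (0:ℝ))) (nhds (y K 0)) := by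
    rw [tendsto_iff_dist_tendsto_zero]
    apply squeeze_zero' (Filter.Eventually.of_forall fun _ => dist_nonneg)
      (g := fun K' => L * |K' - K|)
    · filter_upwards [ev1, evs] with K' h1 h2
      rw [Real.dist_eq]
      have := hlip K' h2 h1 0 hmem0
      linarith [this, mul_comm |K' - K| L]
    · have := tend0.const_mul L
      simpa using this
  -- convergence of the integral
  have tendN : Filter.Tendsto N (nhdsWithin K (Ici (0:ℝ))) (nhds I) := by
    rw [tendsto_iff_dist_tendsto_zero]
    apply squeeze_zero' (Filter.Eventually.of_forall fun _ => dist_nonneg)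
      (g := fun K' => (L * M * hm) * |K' - K|)
    · filter_upwards [ev1, evs] with K' h1 h2
      have hdiff : N K' - I = ∫ x in (-hm)..0, (y K' x - y K x) * y K x := by
        have h3 : (∫ x in (-hm)..0, (y K' x * y K x - y K x ^ 2)) = N K' - I :=
          intervalIntegral.integral_sub (intN K' h2) intI
        rw [← h3]
        apply intervalIntegral.integral_congr
        intro x _; ring
      have hbound : ∀ x ∈ uIoc (-hm) (0:ℝ), ‖(y K' x - y K x) * y K x‖ ≤ |K' - K| * L * M := by
        intro x hx
        rw [huIoc] at hx
        have hx' : x ∈ Icc (-hm) (0:ℝ) := Ioc_subset_Icc_self hx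
        rw [Real.norm_eq_abs, abs_mul]
        exact mul_le_mul (hlip K' h2 h1 x hx') (hM' x hx') (abs_nonneg _)
          (mul_nonneg (abs_nonneg _) hL0)
      have := intervalIntegral.norm_integral_le_of_norm_le_const hbound
      rw [← hdiff] at this
      rw [Real.dist_eq]
      have habs : |(0:ℝ) - -hm| = hm := by rw [zero_sub, neg_neg, abs_of_pos hhm]
      rw [habs] at this
      rw [Real.norm_eq_abs] at this
      calc |N K' - I| ≤ |K' - K| * L * M * hm := this
        _ = (L * M * hm) * |K' - K| := by ring
    · have := tend0.const_mul (L * M * hm)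
      simpa using this
  have tendD : Filter.Tendsto (fun K' => y K' 0 * y K 0) (nhdsWithin K (Ici (0:ℝ)))
      (nhds (y K 0 * y K 0)) := tendz.mul_const (y K 0)
  have hDne : y K 0 * y K 0 ≠ 0 := mul_ne_zero hnvK hnvK
  have tendH : Filter.Tendsto (fun K' => N K' / (y K' 0 * y K 0)) (nhdsWithin K (Ici (0:ℝ)))
      (nhds (I / (y K 0 * y K 0))) := tendN.div tendD hDne
  -- the derivative
  have hder : HasDerivWithinAt (fun K' => y' K' 0 / y K' 0) (I / y K 0 ^ 2) (Ici 0) K := by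
    rw [hasDerivWithinAt_iff_tendsto_slope]
    have h2 : I / y K 0 ^ 2 = I / (y K 0 * y K 0) := by rw [sq]
    rw [h2]
    apply Filter.Tendsto.congr' _ (tendH.mono_left (nhdsWithin_mono K diff_subset))
    filter_upwards [eventually_mem_nhdsWithin] with K' hK'
    obtain ⟨hK'0, hK'ne⟩ := hK'
    have hK'neK : K' ≠ K := hK'ne
    have hKne : K' - K ≠ 0 := sub_ne_zero.2 hK'neK
    have hnvK' : y K' 0 ≠ 0 := hnv K' hK'0
    have hw : y' K' 0 * y K 0 - y K' 0 * y' K 0 = (K' - K) * N K' :=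
      wronsk hab.le (hsol' K hK).1 (hsol' K' hK'0).1
        (hsol' K hK).2.1 (hsol' K' hK'0).2.1 (hsol' K hK).2.2 (hsol' K' hK'0).2.2
    have hsub : y' K' 0 / y K' 0 - y' K 0 / y K 0 =
        (y' K' 0 * y K 0 - y K' 0 * y' K 0) / (y K' 0 * y K 0) :=
      div_sub_div _ _ hnvK' hnvK
    rw [slope_def_field]
    beta_reduce
    rw [hsub, hw, mul_div_assoc, mul_div_cancel_left₀ _ hKne]
  -- positivity
  have hInn : 0 ≤ I := by
    rw [hI_def]
    exact intervalIntegral.integral_nonneg hab.le (fun x _ => sq_nonneg _)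
  have hIne : I ≠ 0 := by
    intro hI0
    set H : ℝ → ℝ := fun t => ∫ x in (-hm)..t, y K x ^ 2 with hH_def
    have hyKsq : ContinuousOn (fun x => y K x ^ 2) (Icc (-hm) (0:ℝ)) := (hyc K hK).pow 2
    have hHc : ContinuousOn H (Icc (-hm) (0:ℝ)) := by
      rw [← huIcc]
      apply intervalIntegral.continuousOn_primitive_interval
      rw [huIcc]
      exact hyKsq.integrableOn_Icc
    have hHd : ∀ t ∈ Ioo (-hm) (0:ℝ), HasDerivAt H (y K t ^ 2) t := by
      intro t ht
      have hcont : ∀ u ∈ Ioo (-hm) (0:ℝ), ContinuousAt (fun x => y K x ^ 2) u := by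
        intro u hu
        exact (((hsol' K hK).1 u (Ioo_subset_Icc_self hu)).1.continuousAt).pow 2
      apply intervalIntegral.integral_hasDerivAt_right
      · apply ContinuousOn.intervalIntegrable
        apply hyKsq.mono
        rw [uIcc_of_le ht.1.le]
        exact Icc_subset_Icc le_rfl ht.2.le
      · exact ContinuousAt.stronglyMeasurableAtFilter isOpen_Ioo hcont t ht
      · exact hcont t ht
    have hH0 : H (-hm) = 0 := intervalIntegral.integral_same
    have hH1 : H 0 = 0 := by
      show (∫ x in (-hm)..(0:ℝ), y K x ^ 2) = 0
      rw [← hI_def]; exact hI0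
    have hHzero := zeroIcc_of_nonneg_deriv hab hHc hHd (fun t _ => sq_nonneg _) hH0 hH1
    have hsq0 := derivZero_of_zeroIoo (fun t ht => hHzero t (Ioo_subset_Icc_self ht)) hHd
    have hyzero : ∀ t ∈ Ioo (-hm) (0:ℝ), y K t = 0 := fun t ht =>
      pow_eq_zero_iff two_ne_zero |>.1 (hsq0 t ht)
    have hnb : (nhdsWithin (0:ℝ) (Ioo (-hm) (0:ℝ))).NeBot := by
      rw [← mem_closure_iff_nhdsWithin_neBot, closure_Ioo (ne_of_lt hab)]
      exact hmem0
    have t1 : Filter.Tendsto (y K) (nhdsWithin 0 (Ioo (-hm) 0)) (nhds (y K 0)) :=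
      (((hsol' K hK).1 0 hmem0).1.continuousAt).continuousWithinAt
    have t2 : Filter.Tendsto (y K) (nhdsWithin 0 (Ioo (-hm) 0)) (nhds 0) := by
      apply Filter.Tendsto.congr' _ tendsto_const_nhds
      filter_upwards [eventually_mem_nhdsWithin] with x hx
      exact (hyzero x hx).symm
    exact hnvK (tendsto_nhds_unique t1 t2)
  have hIpos : 0 < I := lt_of_le_of_ne hInn (Ne.symm hIne)
  have hsqpos : 0 < y K 0 ^ 2 := lt_of_le_of_ne (sq_nonneg _) (Ne.symm (pow_ne_zero 2 hnvK))
  exact ⟨hnvK, hder, div_pos hIpos hsqpos⟩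
end

section
/- Let h₊ > 0, U⁺ ∈ C²([0, h₊]; ℝ), and c ∈ ℝ \ U⁺([0, h₊]). For K ≥ 0 let y⁺(c, √K, ·) be the unique solution on [0, h₊] of −y'' + (K + (U⁺)''/(U⁺ − c)) y = 0 with y(h₊) = 0, y'(h₊) = 1, and define G(K) := (y⁺)'(c, √K, 0)/y⁺(c, √K, 0). Then y⁺(c, √K, 0) ≠ 0 for all K ≥ 0, G is differentiable on [0, ∞), and G'(K) = − y⁺(c, √K, 0)^{−2} ∫_{0}^{h₊} y⁺(c, √K, x)² dx < 0 for every K ≥ 0. -/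
open Set MeasureTheory intervalIntegral

theorem my_pos_integral {f : ℝ → ℝ} {a b x₀ : ℝ} (hab : a < b)
    (hf : ContinuousOn f (Icc a b)) (hnn : ∀ x ∈ Icc a b, 0 ≤ f x)
    (hx₀ : x₀ ∈ Icc a b) (hpos : 0 < f x₀) : 0 < ∫ x in a..b, f x := by
  obtain ⟨δ, hδ, hball⟩ := Metric.continuousWithinAt_iff.mp (hf x₀ hx₀) (f x₀ / 2) (by linarith)
  obtain ⟨h1, h2⟩ := hx₀
  set s := max a (x₀ - δ/2) with hs
  set t := min b (x₀ + δ/2) with ht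
  have hst : s < t := by apply max_lt <;> apply lt_min <;> linarith
  have has : a ≤ s := le_max_left _ _
  have htb : t ≤ b := min_le_left _ _
  have hsub : Icc s t ⊆ Icc a b := Icc_subset_Icc has htb
  have hfint : IntervalIntegrable f volume a b :=
    (hf.mono (by rw [uIcc_of_le hab.le])).intervalIntegrable
  have hlow : ∀ x ∈ Icc s t, f x₀ / 2 ≤ f x := by
    intro x hx
    have hxab : x ∈ Icc a b := hsub hx
    have hdist : dist x x₀ < δ := by
      rw [Real.dist_eq, abs_lt]
      obtain ⟨hx1, hx2⟩ := hx
      have e1 : x₀ - δ/2 ≤ x := le_trans (le_max_right _ _) hx1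
      have e2 : x ≤ x₀ + δ/2 := hx2.trans (min_le_right _ _)
      constructor <;> linarith
    have := hball hxab hdist
    rw [Real.dist_eq, abs_lt] at this
    linarith
  have h1' : (0:ℝ) ≤ ∫ x in a..s, f x :=
    intervalIntegral.integral_nonneg has
      (fun x hx => hnn x ⟨hx.1, hx.2.trans ((hst.le.trans htb))⟩)
  have h3' : (0:ℝ) ≤ ∫ x in t..b, f x :=
    intervalIntegral.integral_nonneg htb
      (fun x hx => hnn x ⟨(has.trans hst.le).trans hx.1, hx.2⟩)
  have h2' : f x₀ / 2 * (t - s) ≤ ∫ x in s..t, f x := by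
    have := intervalIntegral.integral_mono_on hst.le
      (_root_.intervalIntegrable_const)
      (hfint.mono_set (by rw [uIcc_of_le hst.le, uIcc_of_le hab.le]; exact hsub))
      hlow
    simp only [intervalIntegral.integral_const, smul_eq_mul] at this
    linarith
  have hsplit1 : ∫ x in a..b, f x = (∫ x in a..s, f x) + ∫ x in s..b, f x :=
    (intervalIntegral.integral_add_adjacent_intervals
      (hfint.mono_set (by rw [uIcc_of_le has, uIcc_of_le hab.le]; exact Icc_subset_Icc le_rfl (hst.le.trans htb)))
      (hfint.mono_set (by rw [uIcc_of_le (hst.le.trans htb), uIcc_of_le hab.le]; exact Icc_subset_Icc has le_rfl))).symm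
  have hsplit2 : ∫ x in s..b, f x = (∫ x in s..t, f x) + ∫ x in t..b, f x :=
    (intervalIntegral.integral_add_adjacent_intervals
      (hfint.mono_set (by rw [uIcc_of_le hst.le, uIcc_of_le hab.le]; exact hsub))
      (hfint.mono_set (by rw [uIcc_of_le htb, uIcc_of_le hab.le]; exact Icc_subset_Icc (has.trans hst.le) le_rfl))).symm
  have : 0 < f x₀ / 2 * (t - s) := by
    apply mul_pos (by linarith) (by linarith)
  rw [hsplit1, hsplit2]
  linarith


theorem my_wronskian
    (hp : ℝ) (hhp : 0 < hp)
    (q : ℝ → ℝ) (hq : ContinuousOn q (Icc (0:ℝ) hp))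
    (K₁ K₂ : ℝ) (y₁ y₁' y₁'' y₂ y₂' y₂'' : ℝ → ℝ)
    (h₁ : ∀ x ∈ Icc (0:ℝ) hp,
      HasDerivAt y₁ (y₁' x) x ∧ HasDerivAt y₁' (y₁'' x) x ∧ y₁'' x = (K₁ + q x) * y₁ x)
    (h₂ : ∀ x ∈ Icc (0:ℝ) hp,
      HasDerivAt y₂ (y₂' x) x ∧ HasDerivAt y₂' (y₂'' x) x ∧ y₂'' x = (K₂ + q x) * y₂ x)
    (hb₁ : y₁ hp = 0) (hb₂ : y₂ hp = 0) :
    y₁' 0 * y₂ 0 - y₁ 0 * y₂' 0 = (K₂ - K₁) * ∫ x in (0:ℝ)..hp, y₁ x * y₂ x := by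
  have hcont : ContinuousOn (fun x => (K₁ - K₂) * (y₁ x * y₂ x)) (Icc (0:ℝ) hp) := by
    apply ContinuousOn.mul continuousOn_const
    exact ContinuousOn.mul (fun x hx => ((h₁ x hx).1.continuousAt).continuousWithinAt)
      (fun x hx => ((h₂ x hx).1.continuousAt).continuousWithinAt)
  have hW : ∀ x ∈ uIcc (0:ℝ) hp,
      HasDerivAt (fun x => y₁' x * y₂ x - y₁ x * y₂' x) ((K₁ - K₂) * (y₁ x * y₂ x)) x := by
    intro x hx
    rw [uIcc_of_le hhp.le] at hx
    obtain ⟨hd₁, hd₁', he₁⟩ := h₁ x hx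
    obtain ⟨hd₂, hd₂', he₂⟩ := h₂ x hx
    have := (hd₁'.mul hd₂).sub (hd₁.mul hd₂')
    refine this.congr_deriv ?_
    rw [he₁, he₂]; ring
  have hint : ∫ x in (0:ℝ)..hp, (K₁ - K₂) * (y₁ x * y₂ x)
      = (y₁' hp * y₂ hp - y₁ hp * y₂' hp) - (y₁' 0 * y₂ 0 - y₁ 0 * y₂' 0) :=
    intervalIntegral.integral_eq_sub_of_hasDerivAt hW
      ((hcont.mono (by rw [uIcc_of_le hhp.le])).intervalIntegrable)
  rw [intervalIntegral.integral_const_mul] at hint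
  rw [hb₁, hb₂] at hint
  have : (K₁ - K₂) * ∫ x in (0:ℝ)..hp, y₁ x * y₂ x = -(y₁' 0 * y₂ 0 - y₁ 0 * y₂' 0) := by
    rw [hint]; ring
  linarith [this]

theorem my_nonvanish
    (hp : ℝ) (hhp : 0 < hp)
    (Up Up' Up'' : ℝ → ℝ)
    (hUp : ∀ x ∈ Icc (0:ℝ) hp, HasDerivAt Up (Up' x) x)
    (hUp' : ∀ x ∈ Icc (0:ℝ) hp, HasDerivAt Up' (Up'' x) x)
    (hUpc : ContinuousOn Up'' (Icc (0:ℝ) hp))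
    (c : ℝ) (hc : ∀ x ∈ Icc (0:ℝ) hp, Up x ≠ c)
    (K : ℝ) (hK : 0 ≤ K) (z z' z'' : ℝ → ℝ)
    (h : ∀ x ∈ Icc (0:ℝ) hp,
      HasDerivAt z (z' x) x ∧ HasDerivAt z' (z'' x) x ∧
        z'' x = (K + Up'' x / (Up x - c)) * z x)
    (hb : z hp = 0) (hb' : z' hp = 1) :
    z 0 ≠ 0 := by
  intro hz0
  set φ : ℝ → ℝ := fun x => Up x - c with hφ
  have hφne : ∀ x ∈ Icc (0:ℝ) hp, φ x ≠ 0 := fun x hx => sub_ne_zero.mpr (hc x hx)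
  have hφd : ∀ x ∈ Icc (0:ℝ) hp, HasDerivAt φ (Up' x) x := fun x hx => (hUp x hx).sub_const c
  set u : ℝ → ℝ := fun x => z' x * φ x - z x * Up' x with hu
  have hud : ∀ x ∈ Icc (0:ℝ) hp, HasDerivAt u (K * z x * φ x) x := by
    intro x hx
    obtain ⟨hd, hd', he⟩ := h x hx
    have := ((hd'.mul (hφd x hx)).sub (hd.mul (hUp' x hx)))
    refine this.congr_deriv ?_
    have hne := hφne x hx
    rw [he]
    simp only [hφ] at hne ⊢
    field_simp
    ring
  set F : ℝ → ℝ := fun x => u x * z x / φ x with hF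
  have hFd : ∀ x ∈ Icc (0:ℝ) hp,
      HasDerivAt F (K * z x ^ 2 + (u x / φ x) ^ 2) x := by
    intro x hx
    obtain ⟨hd, hd', he⟩ := h x hx
    have hne := hφne x hx
    have := (((hud x hx).mul hd).div (hφd x hx) hne)
    refine this.congr_deriv ?_
    field_simp
    simp only [Pi.mul_apply, hu]
    ring
  have hcont : ContinuousOn (fun x => K * z x ^ 2 + (u x / φ x) ^ 2) (Icc (0:ℝ) hp) := by
    have hz : ContinuousOn z (Icc (0:ℝ) hp) :=
      fun x hx => ((h x hx).1.continuousAt).continuousWithinAt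
    have hz' : ContinuousOn z' (Icc (0:ℝ) hp) :=
      fun x hx => ((h x hx).2.1.continuousAt).continuousWithinAt
    have hUpcont : ContinuousOn Up (Icc (0:ℝ) hp) :=
      fun x hx => ((hUp x hx).continuousAt).continuousWithinAt
    have hUp'cont : ContinuousOn Up' (Icc (0:ℝ) hp) :=
      fun x hx => ((hUp' x hx).continuousAt).continuousWithinAt
    have hφc : ContinuousOn φ (Icc (0:ℝ) hp) := hUpcont.sub continuousOn_const
    have huc : ContinuousOn u (Icc (0:ℝ) hp) := (hz'.mul hφc).sub (hz.mul hUp'cont)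
    exact (continuousOn_const.mul (hz.pow 2)).add ((huc.div hφc hφne).pow 2)
  have hint : ∫ x in (0:ℝ)..hp, (K * z x ^ 2 + (u x / φ x) ^ 2) = F hp - F 0 :=
    intervalIntegral.integral_eq_sub_of_hasDerivAt
      (fun x hx => hFd x (by rwa [uIcc_of_le hhp.le] at hx))
      ((hcont.mono (by rw [uIcc_of_le hhp.le])).intervalIntegrable)
  have hF0 : F 0 = 0 := by simp [hF, hz0]
  have hFhp : F hp = 0 := by simp [hF, hb]
  have hzero : ∫ x in (0:ℝ)..hp, (K * z x ^ 2 + (u x / φ x) ^ 2) = 0 := by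
    rw [hint, hF0, hFhp, sub_zero]
  -- but the integrand is nonneg and positive at hp
  have hnn : ∀ x ∈ Icc (0:ℝ) hp, 0 ≤ K * z x ^ 2 + (u x / φ x) ^ 2 :=
    fun x hx => add_nonneg (mul_nonneg hK (sq_nonneg _)) (sq_nonneg _)
  have hphp : hp ∈ Icc (0:ℝ) hp := ⟨hhp.le, le_rfl⟩
  have huhp : u hp = φ hp := by simp [hu, hb, hb']
  have hposhp : 0 < K * z hp ^ 2 + (u hp / φ hp) ^ 2 := by
    rw [hb, huhp, div_self (hφne hp hphp)]
    norm_num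
  have := my_pos_integral hhp hcont hnn hphp hposhp
  rw [hzero] at this
  exact lt_irrefl 0 this

theorem my_lipschitz
    (hp : ℝ) (hhp : 0 < hp) (q : ℝ → ℝ) (hq : ContinuousOn q (Icc (0:ℝ) hp))
    (K : ℝ) (hK : 0 ≤ K)
    (y y' y'' : ℝ → ℝ → ℝ)
    (hsol : ∀ K' ∈ Ici (0:ℝ),
      (∀ x ∈ Icc (0:ℝ) hp,
        HasDerivAt (y K') (y' K' x) x ∧ HasDerivAt (y' K') (y'' K' x) x ∧
          y'' K' x = (K' + q x) * y K' x) ∧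
      y K' hp = 0 ∧ y' K' hp = 1) :
    ∃ C : ℝ, 0 ≤ C ∧ ∀ K' ∈ Icc (0:ℝ) (K+1), ∀ x ∈ Icc (0:ℝ) hp,
      |y K' x - y K x| ≤ C * |K' - K| := by
  obtain ⟨hK1, hKb, hKb'⟩ := hsol K hK
  -- bound on q
  obtain ⟨Q₀, hQ₀⟩ := (isCompact_Icc (a := (0:ℝ)) (b := hp)).exists_bound_of_continuousOn hq
  set Q := max Q₀ 0 with hQ
  have hQnn : 0 ≤ Q := le_max_right _ _
  have hQb : ∀ x ∈ Icc (0:ℝ) hp, |q x| ≤ Q := fun x hx => (hQ₀ x hx).trans (le_max_left _ _)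
  -- bound on y K
  have hyKc : ContinuousOn (y K) (Icc (0:ℝ) hp) :=
    fun x hx => ((hK1 x hx).1.continuousAt).continuousWithinAt
  obtain ⟨M₀, hM₀⟩ := (isCompact_Icc (a := (0:ℝ)) (b := hp)).exists_bound_of_continuousOn hyKc
  set M := max M₀ 0 with hM
  have hMnn : 0 ≤ M := le_max_right _ _
  have hMb : ∀ x ∈ Icc (0:ℝ) hp, |y K x| ≤ M := fun x hx => (hM₀ x hx).trans (le_max_left _ _)
  set L := K + Q + 2 with hL
  have hLpos : 0 < L := by positivity
  refine ⟨M * Real.exp (L * hp) / L, by positivity, ?_⟩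
  intro K' hK' x hx
  obtain ⟨hK'1, hK'b, hK'b'⟩ := hsol K' (mem_Ici.mpr hK'.1)
  set ε := M * |K' - K| with hε
  have hεnn : 0 ≤ ε := by positivity
  set z : ℝ → ℝ := fun s => y K' s - y K s with hz
  set z' : ℝ → ℝ := fun s => y' K' s - y' K s with hz'
  set z'' : ℝ → ℝ := fun s => y'' K' s - y'' K s with hz''
  set g : ℝ → ℝ × ℝ := fun t => (z (hp - t), z' (hp - t)) with hg
  set g' : ℝ → ℝ × ℝ := fun t => (z' (hp - t) * (-1), z'' (hp - t) * (-1)) with hg'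
  have hmem : ∀ t ∈ Icc (0:ℝ) hp, hp - t ∈ Icc (0:ℝ) hp := by
    intro t ht; exact ⟨by linarith [ht.2], by linarith [ht.1]⟩
  have hgd : ∀ t ∈ Icc (0:ℝ) hp, HasDerivAt g (g' t) t := by
    intro t ht
    have hs := hmem t ht
    have hneg : HasDerivAt (fun t : ℝ => hp - t) (-1) t := (hasDerivAt_id t).const_sub hp
    have h1 : HasDerivAt (fun t => z (hp - t)) (z' (hp - t) * (-1)) t := by
      have := (((hK'1 _ hs).1.sub (hK1 _ hs).1)).comp t hneg
      exact this
    have h2 : HasDerivAt (fun t => z' (hp - t)) (z'' (hp - t) * (-1)) t := by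
      have := (((hK'1 _ hs).2.1.sub (hK1 _ hs).2.1)).comp t hneg
      exact this
    exact h1.prodMk h2
  have hgc : ContinuousOn g (Icc (0:ℝ) hp) :=
    fun t ht => ((hgd t ht).continuousAt).continuousWithinAt
  have hg0 : ‖g 0‖ ≤ 0 := by
    have : g 0 = (0, 0) := by
      simp only [hg, sub_zero, hz, hz']
      rw [hK'b, hKb, hK'b', hKb']
      norm_num
    rw [this]
    simp
  have hbound : ∀ t ∈ Ico (0:ℝ) hp, ‖g' t‖ ≤ L * ‖g t‖ + ε := by
    intro t ht
    have hs := hmem t ⟨ht.1, ht.2.le⟩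
    set s := hp - t
    have hgt : ‖g t‖ = max |z s| |z' s| := by
      simp [hg, Prod.norm_def, Real.norm_eq_abs]
      rfl
    have hz'le : |z' s| ≤ ‖g t‖ := by rw [hgt]; exact le_max_right _ _
    have hzle : |z s| ≤ ‖g t‖ := by rw [hgt]; exact le_max_left _ _
    have hz''eq : z'' s = (K' + q s) * z s + (K' - K) * y K s := by
      simp only [hz'', hz]
      rw [(hK'1 s hs).2.2, (hK1 s hs).2.2]
      ring
    have hz''le : |z'' s| ≤ L * ‖g t‖ + ε := by
      rw [hz''eq]
      calc |(K' + q s) * z s + (K' - K) * y K s|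
          ≤ |(K' + q s) * z s| + |(K' - K) * y K s| := abs_add_le _ _
        _ = |K' + q s| * |z s| + |K' - K| * |y K s| := by rw [abs_mul, abs_mul]
        _ ≤ (K + 1 + Q) * ‖g t‖ + |K' - K| * M := by
            apply add_le_add
            · apply mul_le_mul _ hzle (abs_nonneg _) (by positivity)
              calc |K' + q s| ≤ |K'| + |q s| := abs_add_le _ _
                _ ≤ (K + 1) + Q := add_le_add (by rw [abs_of_nonneg hK'.1]; linarith [hK'.2]) (hQb s hs)
                _ = K + 1 + Q := rfl
            · exact mul_le_mul_of_nonneg_left (hMb s hs) (abs_nonneg _)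
        _ ≤ L * ‖g t‖ + ε := by
            rw [hε]
            have h0 : 0 ≤ ‖g t‖ := norm_nonneg _
            nlinarith [hQnn]
    have : ‖g' t‖ = max |z' s| |z'' s| := by
      simp [hg', Prod.norm_def, Real.norm_eq_abs, abs_mul]
      rfl
    rw [this]
    apply max_le
    · calc |z' s| ≤ ‖g t‖ := hz'le
        _ ≤ L * ‖g t‖ + ε := by nlinarith [norm_nonneg (g t)]
    · exact hz''le
  have hgron := norm_le_gronwallBound_of_norm_deriv_right_le hgc
    (fun t ht => (hgd t ⟨ht.1, ht.2.le⟩).hasDerivWithinAt) hg0 hbound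
  have key : ∀ t ∈ Icc (0:ℝ) hp, ‖g t‖ ≤ ε / L * Real.exp (L * hp) := by
    intro t ht
    have h1 := hgron t ht
    rw [sub_zero, gronwallBound_of_K_ne_0 hLpos.ne'] at h1
    have h2 : Real.exp (L * t) - 1 ≤ Real.exp (L * hp) := by
      have : Real.exp (L * t) ≤ Real.exp (L * hp) :=
        Real.exp_le_exp.mpr (mul_le_mul_of_nonneg_left ht.2 hLpos.le)
      linarith
    calc ‖g t‖ ≤ 0 * Real.exp (L * t) + ε / L * (Real.exp (L * t) - 1) := h1
      _ = ε / L * (Real.exp (L * t) - 1) := by ring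
      _ ≤ ε / L * Real.exp (L * hp) := mul_le_mul_of_nonneg_left h2 (by positivity)
  have hxmem : hp - x ∈ Icc (0:ℝ) hp := hmem x hx
  have hfst : |z x| ≤ ‖g (hp - x)‖ := by
    have h1 : (g (hp - x)).1 = z x := by simp [hg]
    calc |z x| = ‖(g (hp - x)).1‖ := by rw [h1]; simp [Real.norm_eq_abs]
      _ ≤ ‖g (hp - x)‖ := norm_fst_le _
  calc |y K' x - y K x| = |z x| := rfl
    _ ≤ ‖g (hp - x)‖ := hfst
    _ ≤ ε / L * Real.exp (L * hp) := key _ hxmem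
    _ = M * Real.exp (L * hp) / L * |K' - K| := by rw [hε]; ring

/-- Derivative in `K = k²` of `Y⁺(c, √K)` for the upper fundamental solution:
it is negative for every `K ≥ 0`. -/
theorem deriv_K_Y_plus
    (hp : ℝ) (hhp : 0 < hp)
    (Up Up' Up'' : ℝ → ℝ)
    (hUp : ∀ x ∈ Icc (0:ℝ) hp, HasDerivAt Up (Up' x) x)
    (hUp' : ∀ x ∈ Icc (0:ℝ) hp, HasDerivAt Up' (Up'' x) x)
    (hUpc : ContinuousOn Up'' (Icc (0:ℝ) hp))
    (c : ℝ) (hc : ∀ x ∈ Icc (0:ℝ) hp, Up x ≠ c)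
    (y y' y'' : ℝ → ℝ → ℝ)
    (hsol : ∀ K ∈ Ici (0:ℝ),
      (∀ x ∈ Icc (0:ℝ) hp,
        HasDerivAt (y K) (y' K x) x ∧ HasDerivAt (y' K) (y'' K x) x ∧
        -y'' K x + (K + Up'' x / (Up x - c)) * y K x = 0) ∧
      y K hp = 0 ∧ y' K hp = 1) :
    ∀ K ∈ Ici (0:ℝ),
      y K 0 ≠ 0 ∧
      HasDerivWithinAt (fun K' => y' K' 0 / y K' 0)
        (-((∫ x in (0:ℝ)..hp, y K x ^ 2) / y K 0 ^ 2)) (Ici 0) K ∧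
      -((∫ x in (0:ℝ)..hp, y K x ^ 2) / y K 0 ^ 2) < 0 := by
  set q : ℝ → ℝ := fun x => Up'' x / (Up x - c) with hqdef
  have hUcont : ContinuousOn Up (Icc (0:ℝ) hp) :=
    fun x hx => ((hUp x hx).continuousAt).continuousWithinAt
  have hqc : ContinuousOn q (Icc (0:ℝ) hp) :=
    hUpc.div (hUcont.sub continuousOn_const) (fun x hx => sub_ne_zero.mpr (hc x hx))
  have hS : ∀ K ∈ Ici (0:ℝ),
      (∀ x ∈ Icc (0:ℝ) hp,
        HasDerivAt (y K) (y' K x) x ∧ HasDerivAt (y' K) (y'' K x) x ∧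
        y'' K x = (K + q x) * y K x) ∧ y K hp = 0 ∧ y' K hp = 1 := by
    intro K hK
    obtain ⟨h1, h2, h3⟩ := hsol K hK
    exact ⟨fun x hx => ⟨(h1 x hx).1, (h1 x hx).2.1, by linarith [(h1 x hx).2.2]⟩, h2, h3⟩
  -- nonvanishing for every K' ≥ 0
  have hnv : ∀ K' ∈ Ici (0:ℝ), y K' 0 ≠ 0 := by
    intro K' hK'
    obtain ⟨h1, h2, h3⟩ := hS K' hK'
    exact my_nonvanish hp hhp Up Up' Up'' hUp hUp' hUpc c hc K' hK' (y K') (y' K') (y'' K')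
      h1 h2 h3
  intro K hK
  obtain ⟨hK1, hKb, hKb'⟩ := hS K hK
  have hA : y K 0 ≠ 0 := hnv K hK
  have hyKc : ContinuousOn (y K) (Icc (0:ℝ) hp) :=
    fun x hx => ((hK1 x hx).1.continuousAt).continuousWithinAt
  -- positivity of ∫ y K ^ 2
  have hIpos : 0 < ∫ x in (0:ℝ)..hp, y K x ^ 2 := by
    have hder : HasDerivAt (y K) 1 hp := by
      have := (hK1 hp ⟨hhp.le, le_rfl⟩).1
      rwa [hKb'] at this
    have hslope : Filter.Tendsto (slope (y K) hp) (nhdsWithin hp {hp}ᶜ) (nhds 1) :=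
      hasDerivAt_iff_tendsto_slope.mp hder
    have hle : nhdsWithin hp (Iio hp) ≤ nhdsWithin hp {hp}ᶜ :=
      nhdsWithin_mono hp (fun x hx => ne_of_lt hx)
    have E1 : ∀ᶠ x in nhdsWithin hp (Iio hp), 1/2 < slope (y K) hp x :=
      (hslope.mono_left hle).eventually (eventually_gt_nhds (by norm_num))
    have E2 : ∀ᶠ x in nhdsWithin hp (Iio hp), x ∈ Ioi (0:ℝ) :=
      mem_nhdsWithin_of_mem_nhds (Ioi_mem_nhds hhp)
    have E3 : ∀ᶠ x in nhdsWithin hp (Iio hp), x ∈ Iio hp := self_mem_nhdsWithin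
    obtain ⟨x₀, hx₀s, hx₀0, hx₀p⟩ := (E1.and (E2.and E3)).exists
    have hx₀ne : y K x₀ ≠ 0 := by
      intro h0
      rw [slope_def_field, h0, hKb] at hx₀s
      norm_num at hx₀s
    have hx₀mem : x₀ ∈ Icc (0:ℝ) hp := ⟨le_of_lt hx₀0, le_of_lt hx₀p⟩
    exact my_pos_integral hhp (hyKc.pow 2)
      (fun x _ => sq_nonneg _) hx₀mem ((sq_nonneg _).lt_of_ne' (pow_ne_zero 2 hx₀ne))
  have hA2 : 0 < y K 0 ^ 2 := (sq_nonneg _).lt_of_ne' (pow_ne_zero 2 hA)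
  have hneg : -((∫ x in (0:ℝ)..hp, y K x ^ 2) / y K 0 ^ 2) < 0 :=
    neg_lt_zero.mpr (div_pos hIpos hA2)
  -- Part 2: the derivative in K
  refine ⟨hA, ?_, hneg⟩
  obtain ⟨C, hC0, hCb⟩ := my_lipschitz hp hhp q hqc K hK y y' y'' hS
  obtain ⟨M₀, hM₀⟩ := (isCompact_Icc (a := (0:ℝ)) (b := hp)).exists_bound_of_continuousOn hyKc
  set M := max M₀ 0 with hM
  have hMnn : 0 ≤ M := le_max_right _ _
  have hMb : ∀ x ∈ Icc (0:ℝ) hp, |y K x| ≤ M := fun x hx => (hM₀ x hx).trans (le_max_left _ _)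
  set F := nhdsWithin K (Ici (0:ℝ) \ {K}) with hFdef
  have hmemF : ∀ᶠ K' in F, K' ∈ Icc (0:ℝ) (K+1) ∧ K' ≠ K := by
    have e1 : ∀ᶠ K' in F, K' ∈ Ici (0:ℝ) \ {K} := self_mem_nhdsWithin
    have e2 : ∀ᶠ K' in F, K' < K + 1 :=
      mem_nhdsWithin_of_mem_nhds (Iio_mem_nhds (lt_add_one K))
    filter_upwards [e1, e2] with K' h1 h2
    exact ⟨⟨h1.1, h2.le⟩, h1.2⟩
  have hT0 : ∀ D : ℝ, Filter.Tendsto (fun K' => D * |K' - K|) F (nhds 0) := by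
    intro D
    have h1 : Filter.Tendsto (fun K' : ℝ => D * |K' - K|) (nhds K) (nhds (D * |K - K|)) :=
      Filter.Tendsto.const_mul D
        ((continuous_abs.comp (continuous_id.sub continuous_const)).tendsto K)
    simpa using h1.mono_left nhdsWithin_le_nhds
  have hT1 : Filter.Tendsto (fun K' => y K' 0) F (nhds (y K 0)) := by
    rw [tendsto_iff_dist_tendsto_zero]
    apply squeeze_zero' (Filter.Eventually.of_forall fun _ => dist_nonneg) _ (hT0 C)
    filter_upwards [hmemF] with K' h
    rw [Real.dist_eq]
    exact hCb K' h.1 0 ⟨le_rfl, hhp.le⟩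
  have hT2 : Filter.Tendsto (fun K' => ∫ x in (0:ℝ)..hp, y K x * y K' x) F
      (nhds (∫ x in (0:ℝ)..hp, y K x ^ 2)) := by
    rw [tendsto_iff_dist_tendsto_zero]
    apply squeeze_zero' (Filter.Eventually.of_forall fun _ => dist_nonneg) _ (hT0 (M * C * hp))
    filter_upwards [hmemF] with K' h
    have hK'0 : K' ∈ Ici (0:ℝ) := h.1.1
    have hyK'c : ContinuousOn (y K') (Icc (0:ℝ) hp) :=
      fun x hx => (((hS K' hK'0).1 x hx).1.continuousAt).continuousWithinAt
    have int1 : IntervalIntegrable (fun x => y K x * y K' x) volume 0 hp :=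
      ((hyKc.mul hyK'c).mono (by rw [uIcc_of_le hhp.le])).intervalIntegrable
    have int2 : IntervalIntegrable (fun x => y K x ^ 2) volume 0 hp :=
      ((hyKc.pow 2).mono (by rw [uIcc_of_le hhp.le])).intervalIntegrable
    rw [Real.dist_eq, ← intervalIntegral.integral_sub int1 int2]
    have hb : ∀ x ∈ Set.uIoc (0:ℝ) hp, ‖y K x * y K' x - y K x ^ 2‖ ≤ M * (C * |K' - K|) := by
      intro x hx
      rw [Set.uIoc_of_le hhp.le] at hx
      have hxm : x ∈ Icc (0:ℝ) hp := ⟨hx.1.le, hx.2⟩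
      have : y K x * y K' x - y K x ^ 2 = y K x * (y K' x - y K x) := by ring
      rw [this, Real.norm_eq_abs, abs_mul]
      exact mul_le_mul (hMb x hxm) (hCb K' h.1 x hxm) (abs_nonneg _) hMnn
    have := intervalIntegral.norm_integral_le_of_norm_le_const hb
    rw [Real.norm_eq_abs] at this
    calc |∫ x in (0:ℝ)..hp, (y K x * y K' x - y K x ^ 2)| ≤ M * (C * |K' - K|) * |hp - 0| := this
      _ = M * C * hp * |K' - K| := by rw [sub_zero, abs_of_pos hhp]; ring
  have hval : Filter.Tendsto
      (fun K' => -((∫ x in (0:ℝ)..hp, y K x * y K' x) / (y K 0 * y K' 0))) F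
      (nhds (-((∫ x in (0:ℝ)..hp, y K x ^ 2) / y K 0 ^ 2))) := by
    have := (hT2.div (Filter.Tendsto.mul tendsto_const_nhds hT1) (mul_ne_zero hA hA)).neg
    rw [sq]
    exact this
  rw [hasDerivWithinAt_iff_tendsto_slope]
  apply hval.congr'
  filter_upwards [hmemF] with K' h
  obtain ⟨hK'm, hne⟩ := h
  have hK'0 : K' ∈ Ici (0:ℝ) := hK'm.1
  obtain ⟨hK'1, hK'b, hK'b'⟩ := hS K' hK'0
  have hB : y K' 0 ≠ 0 := hnv K' hK'0
  have hW := my_wronskian hp hhp q hqc K K' (y K) (y' K) (y'' K) (y K') (y' K') (y'' K')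
    hK1 hK'1 hKb hK'b
  have hKK' : K' - K ≠ 0 := sub_ne_zero.mpr hne
  rw [slope_def_field]
  field_simp
  linear_combination hW
end
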